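/- arXiv:1901.09744 — 4 statements merged into one kernel-verified Lean document; each statement's English description precedes it below -/
import Mathlib

section
/- Let n be even, a > 0, m = ⌊√(an)⌋, and d = (m, m, 1, ..., 1) (n - 2 ones). Let N_0 be the number of simple graphs on [n] with degree sequence d not containing the edge {1,2}, and N_1 the number containing it. Then N_1/N_0 = m²/(n - 2m), and hence N_1/N_0 → a as n → ∞. -/
set_option linter.unusedSectionVars false
set_option linter.unusedVariables false
set_option maxHeartbeats 1000000


open Finset SimpleGraph Filter

/-- `m = ⌊√(a n)⌋` with `n = 2k + 2`. -/
noncomputable def mdeg (a : ℝ) (k : ℕ) : ℕ := ⌊Real.sqrt (a * (2 * k + 2))⌋₊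

/-- The degree sequence `(m, m, 1, …, 1)` on `n = 2k + 2` vertices. -/
noncomputable def dseq (a : ℝ) (k : ℕ) : Fin (2 * k + 2) → ℕ :=
  fun i => if (i : ℕ) < 2 then mdeg a k else 1

/-- `G` has degree sequence `(m, m, 1, …, 1)`. -/
def DegCond (a : ℝ) (k : ℕ) (G : SimpleGraph (Fin (2 * k + 2))) : Prop :=
  ∀ i, (G.neighborSet i).ncard = dseq a k i

/-- Number of simple graphs with this degree sequence *not* containing the edge `{1,2}`
(vertices `0` and `1` in `Fin n`). -/
noncomputable def N0 (a : ℝ) (k : ℕ) : ℕ :=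
  Nat.card {G : SimpleGraph (Fin (2 * k + 2)) //
    DegCond a k G ∧ ¬ G.Adj ⟨0, by omega⟩ ⟨1, by omega⟩}

/-- Number of simple graphs with this degree sequence containing the edge `{1,2}`. -/
noncomputable def N1 (a : ℝ) (k : ℕ) : ℕ :=
  Nat.card {G : SimpleGraph (Fin (2 * k + 2)) //
    DegCond a k G ∧ G.Adj ⟨0, by omega⟩ ⟨1, by omega⟩}

section Basic
variable {a : ℝ} {k : ℕ} {G : SimpleGraph (Fin (2*k+2))}

example (k : ℕ) : ((0 : Fin (2*k+2)) : ℕ) = 0 := rfl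
example (k : ℕ) : ((1 : Fin (2*k+2)) : ℕ) = 1 := rfl

lemma val_eq_zero_iff {x : Fin (2*k+2)} : x = 0 ↔ (x:ℕ) = 0 := by
  rw [Fin.ext_iff]; rfl

lemma val_eq_one_iff {x : Fin (2*k+2)} : x = 1 ↔ (x:ℕ) = 1 := by
  rw [Fin.ext_iff]; rfl

lemma fzero_ne_one : (0 : Fin (2*k+2)) ≠ 1 := by
  simp [val_eq_one_iff]

lemma val_ne_zero {x : Fin (2*k+2)} (h : x ≠ 0) : (x:ℕ) ≠ 0 :=
  fun hc => h (val_eq_zero_iff.mpr hc)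

lemma val_ne_one {x : Fin (2*k+2)} (h : x ≠ 1) : (x:ℕ) ≠ 1 :=
  fun hc => h (val_eq_one_iff.mpr hc)

lemma deg_zero (hG : DegCond a k G) : (G.neighborSet 0).ncard = mdeg a k := by
  simpa [dseq] using hG 0

lemma deg_one (hG : DegCond a k G) : (G.neighborSet 1).ncard = mdeg a k := by
  simpa [dseq] using hG 1

lemma deg_big (hG : DegCond a k G) {x : Fin (2*k+2)} (hx : 2 ≤ (x:ℕ)) :
    (G.neighborSet x).ncard = 1 := by
  have := hG x
  rwa [dseq, if_neg (by omega)] at this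

lemma uniq_nbr (hG : DegCond a k G) {x y z : Fin (2*k+2)} (hx : 2 ≤ (x:ℕ))
    (hy : G.Adj x y) (hz : G.Adj x z) : y = z := by
  obtain ⟨w, hw⟩ := Set.ncard_eq_one.mp (deg_big hG hx)
  have h1 : y ∈ G.neighborSet x := hy
  have h2 : z ∈ G.neighborSet x := hz
  rw [hw, Set.mem_singleton_iff] at h1 h2
  rw [h1, h2]

lemma nat_card_setOf {α : Type*} (P : α → Prop) :
    Nat.card {x // P x} = {x | P x}.ncard :=
  Nat.card_coe_set_eq {x | P x}

lemma fiberB (hG : DegCond a k G) :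
    Nat.card {p : Fin (2*k+2) × Fin (2*k+2) // G.Adj 0 p.1 ∧ G.Adj 1 p.2}
      = mdeg a k * mdeg a k := by
  rw [Nat.card_congr (Equiv.subtypeProdEquivProd), Nat.card_prod,
    nat_card_setOf, nat_card_setOf]
  have e0 : {x | G.Adj 0 x} = G.neighborSet 0 := rfl
  have e1 : {x | G.Adj 1 x} = G.neighborSet 1 := rfl
  rw [e0, e1, deg_zero hG, deg_one hG]

lemma fiberA (hG : DegCond a k G) (h01 : G.Adj 0 1) (hk : 2 * mdeg a k + 2 < 2*k + 2) :
    Nat.card {p : Fin (2*k+2) × Fin (2*k+2) //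
        G.Adj p.1 p.2 ∧ 2 ≤ (p.1:ℕ) ∧ 2 ≤ (p.2:ℕ)}
      = 2*k + 2 - 2 * mdeg a k := by
  set m := mdeg a k with hm
  set S : Set (Fin (2*k+2) × Fin (2*k+2)) :=
    {p | G.Adj p.1 p.2 ∧ 2 ≤ (p.1:ℕ) ∧ 2 ≤ (p.2:ℕ)} with hS
  rw [nat_card_setOf, ← hS]
  set U : Set (Fin (2*k+2)) := {x | 2 ≤ (x:ℕ)} with hUdef
  have hm1 : 1 ≤ m := by
    have hdz := deg_zero hG
    have hmem : (1 : Fin (2*k+2)) ∈ G.neighborSet 0 := h01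
    have hpos := Set.ncard_pos (Set.toFinite _) |>.mpr ⟨_, hmem⟩
    omega
  -- injectivity of fst on S
  have hinj : Set.InjOn Prod.fst S := by
    rintro ⟨x, y⟩ ⟨hadj, hx, hy⟩ ⟨x', y'⟩ ⟨hadj', hx', hy'⟩ h
    simp only at h
    subst h
    have : y = y' := uniq_nbr hG hx hadj hadj'
    simp [this]
  have hval0 : ((0 : Fin (2*k+2)) : ℕ) = 0 := rfl
  have hval1 : ((1 : Fin (2*k+2)) : ℕ) = 1 := rfl
  -- image
  have himg : Prod.fst '' S = U \ (G.neighborSet 0 ∪ G.neighborSet 1) := by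
    ext x
    constructor
    · rintro ⟨⟨x', y⟩, ⟨hadj, hx, hy⟩, rfl⟩
      dsimp only at hadj hx hy ⊢
      refine ⟨hx, ?_⟩
      rintro (h | h)
      · have he : y = 0 := uniq_nbr hG hx hadj h.symm
        rw [he] at hy
        simp at hy
      · have he : y = 1 := uniq_nbr hG hx hadj h.symm
        rw [he] at hy
        simp at hy
    · rintro ⟨hxU, hxW⟩
      obtain ⟨y, hy⟩ := Set.ncard_eq_one.mp (deg_big hG hxU)
      have hadj : G.Adj x y := by
        have : y ∈ G.neighborSet x := by rw [hy]; rfl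
        exact this
      have hy0 : y ≠ 0 := by
        rintro rfl
        exact hxW (Or.inl hadj.symm)
      have hy1 : y ≠ 1 := by
        rintro rfl
        exact hxW (Or.inr hadj.symm)
      have hy0' := val_ne_zero hy0
      have hy1' := val_ne_one hy1
      exact ⟨(x, y), ⟨hadj, hxU, by dsimp only; omega⟩, rfl⟩
  have hUcard : U.ncard = 2*k := by
    have hU : U = Set.univ \ {0, 1} := by
      ext x
      simp only [hUdef, Set.mem_setOf_eq, Set.mem_diff, Set.mem_univ, true_and,
        Set.mem_insert_iff, Set.mem_singleton_iff, val_eq_zero_iff, val_eq_one_iff]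
      omega
    rw [hU, Set.ncard_diff (Set.subset_univ _), Set.ncard_univ,
      Nat.card_eq_fintype_card, Fintype.card_fin, Set.ncard_pair fzero_ne_one]
    omega
  have hsplit : (G.neighborSet 0 ∪ G.neighborSet 1) ∩ U
      = (G.neighborSet 0 \ {1}) ∪ (G.neighborSet 1 \ {0}) := by
    ext x
    simp only [Set.mem_inter_iff, Set.mem_union, Set.mem_diff, Set.mem_singleton_iff,
      hUdef, Set.mem_setOf_eq, SimpleGraph.mem_neighborSet]
    constructor
    · rintro ⟨(h | h), hU2⟩
      · exact Or.inl ⟨h, fun hc => by rw [hc, hval1] at hU2; omega⟩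
      · exact Or.inr ⟨h, fun hc => by rw [hc, hval0] at hU2; omega⟩
    · rintro (⟨h, hne⟩ | ⟨h, hne⟩)
      · have h0 := val_ne_zero h.ne'
        have h1 := val_ne_one hne
        exact ⟨Or.inl h, by omega⟩
      · have h1 := val_ne_one h.ne'
        have h0 := val_ne_zero hne
        exact ⟨Or.inr h, by omega⟩
  have hdisj : Disjoint (G.neighborSet 0 \ {1}) (G.neighborSet 1 \ {0}) := by
    rw [Set.disjoint_left]
    rintro x ⟨hx0, hne1⟩ ⟨hx1, hne0⟩
    have hxv : 2 ≤ (x:ℕ) := by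
      have h0 := val_ne_zero hx0.ne'
      have h1 := val_ne_one hne1
      omega
    exact fzero_ne_one (uniq_nbr hG hxv hx0.symm hx1.symm)
  have hc0 : (G.neighborSet 0 \ {1}).ncard = m - 1 := by
    have hmem : (1 : Fin (2*k+2)) ∈ G.neighborSet 0 := h01
    rw [Set.ncard_diff_singleton_of_mem hmem, deg_zero hG]
  have hc1 : (G.neighborSet 1 \ {0}).ncard = m - 1 := by
    have hmem : (0 : Fin (2*k+2)) ∈ G.neighborSet 1 := h01.symm
    rw [Set.ncard_diff_singleton_of_mem hmem, deg_one hG]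
  have hfinal : S.ncard = U.ncard - ((G.neighborSet 0 ∪ G.neighborSet 1) ∩ U).ncard := by
    rw [← Set.ncard_image_of_injOn hinj, himg, ← Set.diff_inter_self_eq_diff,
      Set.ncard_diff Set.inter_subset_right (Set.toFinite _)]
  rw [hfinal, hsplit, Set.ncard_union_eq hdisj (Set.toFinite _) (Set.toFinite _),
    hUcard, hc0, hc1]
  omega

end Basic
open SimpleGraph

section Swap
variable {V : Type*} (G : SimpleGraph V) (p q u v : V)

/-- delete edges pq, uv; add edges pu, qv -/
def GSwap : SimpleGraph V :=
  (G.deleteEdges {s(p,q), s(u,v)}) ⊔ SimpleGraph.fromEdgeSet {s(p,u), s(q,v)}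

lemma gswap_adj (w z : V) : (GSwap G p q u v).Adj w z ↔
    (G.Adj w z ∧ ¬(s(w,z) = s(p,q)) ∧ ¬(s(w,z) = s(u,v))) ∨
      ((s(w,z) = s(p,u) ∨ s(w,z) = s(q,v)) ∧ w ≠ z) := by
  simp only [GSwap, sup_adj, deleteEdges_adj, fromEdgeSet_adj, Set.mem_insert_iff,
    Set.mem_singleton_iff]
  tauto

variable {p q u v}
variable (hpq : p ≠ q) (hpu : p ≠ u) (hpv : p ≠ v) (hqu : q ≠ u) (hqv : q ≠ v) (huv : u ≠ v)

include hpq hpu hpv hqv in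
lemma gswap_nbr_p : (GSwap G p q u v).neighborSet p = insert u (G.neighborSet p \ {q}) := by
  ext z
  simp only [mem_neighborSet, gswap_adj, Sym2.eq_iff, Set.mem_insert_iff, Set.mem_diff,
    Set.mem_singleton_iff]
  constructor
  · rintro (⟨h, h1, h2⟩ | ⟨(h | h), hne⟩) <;> tauto
  · rintro (rfl | ⟨h, hzq⟩)
    · exact Or.inr ⟨Or.inl (by tauto), hpu⟩
    · exact Or.inl ⟨h, by tauto, by tauto⟩

include hpq hpu hqu hqv huv in
lemma gswap_nbr_q : (GSwap G p q u v).neighborSet q = insert v (G.neighborSet q \ {p}) := by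
  ext z
  simp only [mem_neighborSet, gswap_adj, Sym2.eq_iff, Set.mem_insert_iff, Set.mem_diff,
    Set.mem_singleton_iff]
  constructor
  · rintro (⟨h, h1, h2⟩ | ⟨(h | h), hne⟩) <;> tauto
  · rintro (rfl | ⟨h, hzp⟩)
    · exact Or.inr ⟨Or.inr (by tauto), hqv⟩
    · exact Or.inl ⟨h, by tauto, by tauto⟩

include hpu hpv hqu huv in
lemma gswap_nbr_u : (GSwap G p q u v).neighborSet u = insert p (G.neighborSet u \ {v}) := by
  ext z
  simp only [mem_neighborSet, gswap_adj, Sym2.eq_iff, Set.mem_insert_iff, Set.mem_diff,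
    Set.mem_singleton_iff]
  constructor
  · rintro (⟨h, h1, h2⟩ | ⟨(h | h), hne⟩) <;> tauto
  · rintro (rfl | ⟨h, hzv⟩)
    · exact Or.inr ⟨Or.inl (by tauto), fun hh => hpu hh.symm⟩
    · exact Or.inl ⟨h, by tauto, by tauto⟩

include hpv hqu hqv huv in
lemma gswap_nbr_v : (GSwap G p q u v).neighborSet v = insert q (G.neighborSet v \ {u}) := by
  ext z
  simp only [mem_neighborSet, gswap_adj, Sym2.eq_iff, Set.mem_insert_iff, Set.mem_diff,
    Set.mem_singleton_iff]
  constructor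
  · rintro (⟨h, h1, h2⟩ | ⟨(h | h), hne⟩) <;> tauto
  · rintro (rfl | ⟨h, hzu⟩)
    · exact Or.inr ⟨Or.inr (by tauto), fun hh => hqv hh.symm⟩
    · exact Or.inl ⟨h, by tauto, by tauto⟩

lemma gswap_nbr_other {i : V} (hip : i ≠ p) (hiq : i ≠ q) (hiu : i ≠ u) (hiv : i ≠ v) :
    (GSwap G p q u v).neighborSet i = G.neighborSet i := by
  ext z
  simp only [mem_neighborSet, gswap_adj, Sym2.eq_iff]
  constructor
  · rintro (⟨h, h1, h2⟩ | ⟨(h | h), hne⟩) <;> tauto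
  · intro h
    exact Or.inl ⟨h, by tauto, by tauto⟩

include hpu in
lemma gswap_adj_pu : (GSwap G p q u v).Adj p u := by
  rw [gswap_adj]; tauto

include hqv in
lemma gswap_adj_qv : (GSwap G p q u v).Adj q v := by
  rw [gswap_adj]; tauto

include hpq hpu hpv hqu in
lemma gswap_not_adj_pq : ¬ (GSwap G p q u v).Adj p q := by
  rw [gswap_adj]
  simp only [Sym2.eq_iff]
  tauto

include hpu hpv hqu hqv huv in
lemma gswap_not_adj_uv : ¬ (GSwap G p q u v).Adj u v := by
  rw [gswap_adj]
  simp only [Sym2.eq_iff]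
  tauto

/-- double swap gives back the original graph -/
lemma gswap_gswap (hpq' : G.Adj p q) (huv' : G.Adj u v) (hpu' : ¬ G.Adj p u)
    (hqv' : ¬ G.Adj q v) : GSwap (GSwap G p q u v) p u q v = G := by
  ext w z
  rw [gswap_adj, gswap_adj]
  constructor
  · rintro (⟨(⟨h, _, _⟩ | ⟨(h | h), hne⟩), h1, h2⟩ | ⟨(h | h), hne⟩) <;>
      first
      | exact h
      | tauto
      | (rcases Sym2.eq_iff.mp h with (⟨rfl, rfl⟩ | ⟨rfl, rfl⟩) <;>
          first | exact hpq' | exact hpq'.symm | exact huv' | exact huv'.symm)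
  · intro h
    by_cases h1 : s(w,z) = s(p,q)
    · exact Or.inr ⟨Or.inl h1, h.ne⟩
    by_cases h2 : s(w,z) = s(u,v)
    · exact Or.inr ⟨Or.inr h2, h.ne⟩
    by_cases h3 : s(w,z) = s(p,u)
    · rcases Sym2.eq_iff.mp h3 with (⟨rfl, rfl⟩ | ⟨rfl, rfl⟩)
      · exact absurd h hpu'
      · exact absurd h.symm hpu'
    by_cases h4 : s(w,z) = s(q,v)
    · rcases Sym2.eq_iff.mp h4 with (⟨rfl, rfl⟩ | ⟨rfl, rfl⟩)
      · exact absurd h hqv'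
      · exact absurd h.symm hqv'
    · exact Or.inl ⟨Or.inl ⟨h, h1, h2⟩, h3, h4⟩

end Swap

section Preserve
variable {a : ℝ} {k : ℕ} {G : SimpleGraph (Fin (2*k+2))}

lemma ncard_exchange {α : Type*} [Fintype α] {s : Set α} {q' u' : α}
    (hq : q' ∈ s) (hu : u' ∉ s) : (insert u' (s \ {q'})).ncard = s.ncard := by
  rw [Set.ncard_insert_of_notMem (fun h => hu h.1) (Set.toFinite _),
    Set.ncard_diff_singleton_of_mem hq]
  have := Set.ncard_pos (Set.toFinite s) |>.mpr ⟨q', hq⟩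
  omega

lemma degCond_gswap {p q u v : Fin (2*k+2)}
    (hpq : p ≠ q) (hpu : p ≠ u) (hpv : p ≠ v) (hqu : q ≠ u) (hqv : q ≠ v) (huv : u ≠ v)
    (hApq : G.Adj p q) (hAuv : G.Adj u v) (hNpu : ¬ G.Adj p u) (hNqv : ¬ G.Adj q v)
    (hG : DegCond a k G) : DegCond a k (GSwap G p q u v) := by
  intro i
  by_cases hip : i = p
  · subst hip
    rw [gswap_nbr_p G hpq hpu hpv hqv,
      ncard_exchange (show q ∈ G.neighborSet i from hApq) (show u ∉ G.neighborSet i from hNpu)]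
    exact hG i
  by_cases hiq : i = q
  · subst hiq
    rw [gswap_nbr_q G hpq hpu hqu hqv huv,
      ncard_exchange (show p ∈ G.neighborSet i from hApq.symm) (show v ∉ G.neighborSet i from hNqv)]
    exact hG i
  by_cases hiu : i = u
  · subst hiu
    rw [gswap_nbr_u G hpu hpv hqu huv,
      ncard_exchange (show v ∈ G.neighborSet i from hAuv)
        (show p ∉ G.neighborSet i from fun h => hNpu (G.adj_symm h))]
    exact hG i
  by_cases hiv : i = v
  · subst hiv
    rw [gswap_nbr_v G hpv hqu hqv huv,
      ncard_exchange (show u ∈ G.neighborSet i from hAuv.symm)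
        (show q ∉ G.neighborSet i from fun h => hNqv (G.adj_symm h))]
    exact hG i
  · rw [gswap_nbr_other G hip hiq hiu hiv]
    exact hG i

-- structural facts
lemma not_adj_zero (hG : DegCond a k G) {x y : Fin (2*k+2)} (hx : 2 ≤ (x:ℕ))
    (hy : 2 ≤ (y:ℕ)) (hxy : G.Adj x y) : ¬ G.Adj 0 x := by
  intro h
  have := uniq_nbr hG hx hxy h.symm
  rw [this] at hy
  simp at hy

lemma not_adj_one (hG : DegCond a k G) {x y : Fin (2*k+2)} (hx : 2 ≤ (x:ℕ))
    (hy : 2 ≤ (y:ℕ)) (hxy : G.Adj x y) : ¬ G.Adj 1 y := by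
  intro h
  have : x = 1 := uniq_nbr hG hy hxy.symm h.symm
  rw [this] at hx
  simp at hx

lemma zero_ne_of_two_le {x : Fin (2*k+2)} (hx : 2 ≤ (x:ℕ)) : (0 : Fin (2*k+2)) ≠ x := by
  intro h
  rw [← h] at hx
  simp at hx

lemma one_ne_of_two_le {x : Fin (2*k+2)} (hx : 2 ≤ (x:ℕ)) : (1 : Fin (2*k+2)) ≠ x := by
  intro h
  rw [← h] at hx
  norm_num at hx

end Preserve

section Bij
variable (a : ℝ) (k : ℕ)

def TA : Type :=
  {t : SimpleGraph (Fin (2*k+2)) × Fin (2*k+2) × Fin (2*k+2) //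
    DegCond a k t.1 ∧ t.1.Adj 0 1 ∧ t.1.Adj t.2.1 t.2.2 ∧ 2 ≤ (t.2.1:ℕ) ∧ 2 ≤ (t.2.2:ℕ)}

def TB : Type :=
  {t : SimpleGraph (Fin (2*k+2)) × Fin (2*k+2) × Fin (2*k+2) //
    DegCond a k t.1 ∧ ¬ t.1.Adj 0 1 ∧ t.1.Adj 0 t.2.1 ∧ t.1.Adj 1 t.2.2}

variable {a k}

lemma fwd_mem (t : TA a k) :
    DegCond a k (GSwap t.1.1 0 1 t.1.2.1 t.1.2.2) ∧
      ¬ (GSwap t.1.1 0 1 t.1.2.1 t.1.2.2).Adj 0 1 ∧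
      (GSwap t.1.1 0 1 t.1.2.1 t.1.2.2).Adj 0 t.1.2.1 ∧
      (GSwap t.1.1 0 1 t.1.2.1 t.1.2.2).Adj 1 t.1.2.2 := by
  obtain ⟨⟨G, x, y⟩, hG, h01, hxy, hx, hy⟩ := t
  dsimp only at *
  have h0x := zero_ne_of_two_le hx
  have h0y := zero_ne_of_two_le hy
  have h1x := one_ne_of_two_le hx
  have h1y := one_ne_of_two_le hy
  refine ⟨degCond_gswap fzero_ne_one h0x h0y h1x h1y hxy.ne h01 hxy
      (not_adj_zero hG hx hy hxy) (not_adj_one hG hx hy hxy) hG, ?_, ?_, ?_⟩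
  · exact gswap_not_adj_pq G fzero_ne_one h0x h0y h1x
  · exact gswap_adj_pu G h0x
  · exact gswap_adj_qv G h1y

lemma bwd_facts (t : TB a k) :
    2 ≤ (t.1.2.1:ℕ) ∧ 2 ≤ (t.1.2.2:ℕ) ∧ t.1.2.1 ≠ t.1.2.2 ∧ ¬ t.1.1.Adj t.1.2.1 t.1.2.2 := by
  obtain ⟨⟨G, x, y⟩, hG, hn01, h0x, h1y⟩ := t
  dsimp only at *
  have hx2 : 2 ≤ (x:ℕ) := by
    have h0 : x ≠ 0 := h0x.ne'
    have h1 : x ≠ 1 := by rintro rfl; exact hn01 h0x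
    have := val_ne_zero h0
    have := val_ne_one h1
    omega
  have hy2 : 2 ≤ (y:ℕ) := by
    have h1 : y ≠ 1 := h1y.ne'
    have h0 : y ≠ 0 := by rintro rfl; exact hn01 h1y.symm
    have := val_ne_zero h0
    have := val_ne_one h1
    omega
  have hxy : x ≠ y := by
    rintro rfl
    exact fzero_ne_one (uniq_nbr hG hx2 h0x.symm h1y.symm)
  refine ⟨hx2, hy2, hxy, fun h => ?_⟩
  have : (0 : Fin (2*k+2)) = y := uniq_nbr hG hx2 h0x.symm h
  rw [← this] at hy2
  simp at hy2

lemma bwd_mem (t : TB a k) :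
    DegCond a k (GSwap t.1.1 0 t.1.2.1 1 t.1.2.2) ∧
      (GSwap t.1.1 0 t.1.2.1 1 t.1.2.2).Adj 0 1 ∧
      (GSwap t.1.1 0 t.1.2.1 1 t.1.2.2).Adj t.1.2.1 t.1.2.2 ∧
      2 ≤ (t.1.2.1:ℕ) ∧ 2 ≤ (t.1.2.2:ℕ) := by
  obtain ⟨hx2, hy2, hxy, hnxy⟩ := bwd_facts t
  obtain ⟨⟨G, x, y⟩, hG, hn01, h0x, h1y⟩ := t
  dsimp only at *
  have h0x' := zero_ne_of_two_le hx2
  have h0y' := zero_ne_of_two_le hy2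
  have h1x' := one_ne_of_two_le hx2
  have h1y' := one_ne_of_two_le hy2
  refine ⟨degCond_gswap h0x' fzero_ne_one h0y' (fun h => h1x' h.symm) hxy h1y'
      h0x h1y hn01 hnxy hG, ?_, ?_, hx2, hy2⟩
  · exact gswap_adj_pu G fzero_ne_one
  · exact gswap_adj_qv G hxy

noncomputable def fwd (t : TA a k) : TB a k :=
  ⟨(GSwap t.1.1 0 1 t.1.2.1 t.1.2.2, t.1.2.1, t.1.2.2), fwd_mem t⟩

noncomputable def bwd (t : TB a k) : TA a k :=
  ⟨(GSwap t.1.1 0 t.1.2.1 1 t.1.2.2, t.1.2.1, t.1.2.2), bwd_mem t⟩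

noncomputable def equivAB : TA a k ≃ TB a k where
  toFun := fwd
  invFun := bwd
  left_inv := by
    rintro ⟨⟨G, x, y⟩, hG, h01, hxy, hx, hy⟩
    apply Subtype.ext
    dsimp only [fwd, bwd]
    rw [gswap_gswap G h01 hxy (not_adj_zero hG hx hy hxy) (not_adj_one hG hx hy hxy)]
  right_inv := by
    intro t
    obtain ⟨hx2, hy2, hxy, hnxy⟩ := bwd_facts t
    obtain ⟨⟨G, x, y⟩, hG, hn01, h0x, h1y⟩ := t
    dsimp only at *
    apply Subtype.ext
    dsimp only [fwd, bwd]
    rw [gswap_gswap G h0x h1y hn01 hnxy]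

end Bij


section Cards
variable (a : ℝ) (k : ℕ)

lemma N1_eq : N1 a k
    = Nat.card {G : SimpleGraph (Fin (2*k+2)) // DegCond a k G ∧ G.Adj 0 1} := rfl

lemma N0_eq : N0 a k
    = Nat.card {G : SimpleGraph (Fin (2*k+2)) // DegCond a k G ∧ ¬ G.Adj 0 1} := rfl

noncomputable def eA : TA a k ≃
    (G : {G : SimpleGraph (Fin (2*k+2)) // DegCond a k G ∧ G.Adj 0 1}) ×
      {p : Fin (2*k+2) × Fin (2*k+2) // G.1.Adj p.1 p.2 ∧ 2 ≤ (p.1:ℕ) ∧ 2 ≤ (p.2:ℕ)} where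
  toFun t := ⟨⟨t.1.1, t.2.1, t.2.2.1⟩,
    ⟨(t.1.2.1, t.1.2.2), t.2.2.2.1, t.2.2.2.2.1, t.2.2.2.2.2⟩⟩
  invFun s := ⟨(s.1.1, s.2.1.1, s.2.1.2), s.1.2.1, s.1.2.2, s.2.2.1, s.2.2.2.1, s.2.2.2.2⟩
  left_inv t := rfl
  right_inv s := rfl

noncomputable def eB : TB a k ≃
    (G : {G : SimpleGraph (Fin (2*k+2)) // DegCond a k G ∧ ¬ G.Adj 0 1}) ×
      {p : Fin (2*k+2) × Fin (2*k+2) // G.1.Adj 0 p.1 ∧ G.1.Adj 1 p.2} where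
  toFun t := ⟨⟨t.1.1, t.2.1, t.2.2.1⟩, ⟨(t.1.2.1, t.1.2.2), t.2.2.2.1, t.2.2.2.2⟩⟩
  invFun s := ⟨(s.1.1, s.2.1.1, s.2.1.2), s.1.2.1, s.1.2.2, s.2.2.1, s.2.2.2⟩
  left_inv t := rfl
  right_inv s := rfl

variable {a k}

lemma cardA (hk : 2 * mdeg a k + 2 < 2*k + 2) :
    Nat.card (TA a k) = N1 a k * (2*k + 2 - 2 * mdeg a k) := by
  classical
  rw [Nat.card_congr (eA a k), Nat.card_eq_fintype_card, Fintype.card_sigma]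
  have h : ∀ G : {G : SimpleGraph (Fin (2*k+2)) // DegCond a k G ∧ G.Adj 0 1},
      Fintype.card {p : Fin (2*k+2) × Fin (2*k+2) //
          G.1.Adj p.1 p.2 ∧ 2 ≤ (p.1:ℕ) ∧ 2 ≤ (p.2:ℕ)} = 2*k + 2 - 2 * mdeg a k := by
    intro G
    rw [← Nat.card_eq_fintype_card]
    exact fiberA G.2.1 G.2.2 hk
  rw [Finset.sum_congr rfl (fun G _ => h G), Finset.sum_const, smul_eq_mul,
    Finset.card_univ, ← Nat.card_eq_fintype_card, ← N1_eq]

lemma cardB :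
    Nat.card (TB a k) = N0 a k * (mdeg a k * mdeg a k) := by
  classical
  rw [Nat.card_congr (eB a k), Nat.card_eq_fintype_card, Fintype.card_sigma]
  have h : ∀ G : {G : SimpleGraph (Fin (2*k+2)) // DegCond a k G ∧ ¬ G.Adj 0 1},
      Fintype.card {p : Fin (2*k+2) × Fin (2*k+2) //
          G.1.Adj 0 p.1 ∧ G.1.Adj 1 p.2} = mdeg a k * mdeg a k := by
    intro G
    rw [← Nat.card_eq_fintype_card]
    exact fiberB G.2.1
  rw [Finset.sum_congr rfl (fun G _ => h G), Finset.sum_const, smul_eq_mul,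
    Finset.card_univ, ← Nat.card_eq_fintype_card, ← N0_eq]

lemma key_identity (hk : 2 * mdeg a k + 2 < 2*k + 2) :
    N1 a k * (2*k + 2 - 2 * mdeg a k) = N0 a k * (mdeg a k * mdeg a k) := by
  rw [← cardA hk, ← cardB, Nat.card_congr (equivAB)]

end Cards

section Exist
variable {a : ℝ} {k : ℕ}

/-- helper relation for the witness graph -/
def exRel (m x y : ℕ) : Prop :=
  (x = 0 ∧ 2 ≤ y ∧ y < m + 2) ∨ (x = 1 ∧ m + 2 ≤ y ∧ y < 2*m + 2) ∨
    (2*m + 2 ≤ x ∧ y = x + 1 ∧ (x - (2*m + 2)) % 2 = 0)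

def exGraph (m k : ℕ) : SimpleGraph (Fin (2*k+2)) where
  Adj u v := exRel m u.val v.val ∨ exRel m v.val u.val
  symm := by constructor; intro u v h; tauto
  loopless := by constructor; intro u h; unfold exRel at h; omega

lemma ncard_val_Ico {n : ℕ} (c d : ℕ) (hd : d ≤ n) :
    {x : Fin n | c ≤ x.val ∧ x.val < d}.ncard = d - c := by
  have himg : Fin.val '' {x : Fin n | c ≤ x.val ∧ x.val < d} = Set.Ico c d := by
    ext w
    constructor
    · rintro ⟨x, ⟨h1, h2⟩, rfl⟩
      exact ⟨h1, h2⟩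
    · rintro ⟨h1, h2⟩
      exact ⟨⟨w, by omega⟩, ⟨h1, h2⟩, rfl⟩
  rw [← Set.ncard_image_of_injective _ Fin.val_injective, himg, ← Finset.coe_Ico,
    Set.ncard_coe_finset, Nat.card_Ico]

lemma ncard_val_singleton {n : ℕ} (w : ℕ) (hw : w < n) :
    {x : Fin n | x.val = w}.ncard = 1 := by
  have : {x : Fin n | x.val = w} = {⟨w, hw⟩} := by
    ext x
    simp [Fin.ext_iff]
  rw [this, Set.ncard_singleton]

lemma exGraph_degCond (hk : 2 * mdeg a k + 2 < 2*k + 2) : DegCond a k (exGraph (mdeg a k) k) := by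
  set m := mdeg a k with hm
  intro i
  rcases Nat.lt_or_ge i.val 2 with hi | hi
  · -- i = 0 or 1
    rcases Nat.lt_or_ge i.val 1 with hi0 | hi1
    · have hnb : (exGraph m k).neighborSet i = {x : Fin (2*k+2) | 2 ≤ x.val ∧ x.val < m + 2} := by
        ext v
        simp only [SimpleGraph.mem_neighborSet, exGraph, exRel, Set.mem_setOf_eq]
        omega
      rw [hnb, ncard_val_Ico 2 (m+2) (by omega), dseq, if_pos hi]
      omega
    · have hnb : (exGraph m k).neighborSet i
          = {x : Fin (2*k+2) | m + 2 ≤ x.val ∧ x.val < 2*m + 2} := by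
        ext v
        simp only [SimpleGraph.mem_neighborSet, exGraph, exRel, Set.mem_setOf_eq]
        omega
      rw [hnb, ncard_val_Ico (m+2) (2*m+2) (by omega), dseq, if_pos hi]
      omega
  · rw [dseq, if_neg (by omega)]
    rcases Nat.lt_or_ge i.val (m+2) with h2 | h2
    · have hnb : (exGraph m k).neighborSet i = {x : Fin (2*k+2) | x.val = 0} := by
        ext v
        simp only [SimpleGraph.mem_neighborSet, exGraph, exRel, Set.mem_setOf_eq]
        omega
      rw [hnb, ncard_val_singleton 0 (by omega)]
    rcases Nat.lt_or_ge i.val (2*m+2) with h3 | h3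
    · have hnb : (exGraph m k).neighborSet i = {x : Fin (2*k+2) | x.val = 1} := by
        ext v
        simp only [SimpleGraph.mem_neighborSet, exGraph, exRel, Set.mem_setOf_eq]
        omega
      rw [hnb, ncard_val_singleton 1 (by omega)]
    rcases Nat.even_or_odd (i.val - (2*m+2)) with he | ho
    · have hpar : (i.val - (2*m+2)) % 2 = 0 := Nat.even_iff.mp he
      have hnb : (exGraph m k).neighborSet i = {x : Fin (2*k+2) | x.val = i.val + 1} := by
        ext v
        simp only [SimpleGraph.mem_neighborSet, exGraph, exRel, Set.mem_setOf_eq]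
        omega
      have hlt : i.val + 1 < 2*k + 2 := by
        have := i.isLt
        omega
      rw [hnb, ncard_val_singleton (i.val + 1) hlt]
    · have hpar : (i.val - (2*m+2)) % 2 = 1 := Nat.odd_iff.mp ho
      have hnb : (exGraph m k).neighborSet i = {x : Fin (2*k+2) | x.val = i.val - 1} := by
        ext v
        simp only [SimpleGraph.mem_neighborSet, exGraph, exRel, Set.mem_setOf_eq]
        omega
      have hlt : i.val - 1 < 2*k + 2 := by
        have := i.isLt
        omega
      rw [hnb, ncard_val_singleton (i.val - 1) hlt]

lemma exGraph_not_adj : ¬ (exGraph (mdeg a k) k).Adj 0 1 := by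
  intro h
  have h0 : ((0 : Fin (2*k+2)) : ℕ) = 0 := rfl
  have h1 : ((1 : Fin (2*k+2)) : ℕ) = 1 := rfl
  simp only [exGraph, exRel, h0, h1] at h
  omega

lemma N0_pos (hk : 2 * mdeg a k + 2 < 2*k + 2) : 0 < N0 a k := by
  rw [N0_eq]
  have : Nonempty {G : SimpleGraph (Fin (2*k+2)) // DegCond a k G ∧ ¬ G.Adj 0 1} :=
    ⟨⟨exGraph (mdeg a k) k, exGraph_degCond hk, exGraph_not_adj⟩⟩
  exact Nat.card_pos

lemma N1_zero_of_m_zero (hm : mdeg a k = 0) : N1 a k = 0 := by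
  rw [N1_eq]
  rw [Nat.card_eq_zero]
  left
  constructor
  rintro ⟨G, hG, h01⟩
  have hdz := deg_zero hG
  have hmem : (1 : Fin (2*k+2)) ∈ G.neighborSet 0 := h01
  have hpos := Set.ncard_pos (Set.toFinite _) |>.mpr ⟨_, hmem⟩
  omega

end Exist

section Final
variable {a : ℝ} {k : ℕ}

lemma ratio_eq (hk : 2 * mdeg a k + 2 < 2*k + 2) :
    (N1 a k : ℝ) / (N0 a k : ℝ)
      = (mdeg a k : ℝ) ^ 2 / ((2 * k + 2 : ℝ) - 2 * (mdeg a k : ℝ)) := by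
  by_cases hm : mdeg a k = 0
  · rw [N1_zero_of_m_zero hm, hm]
    norm_num
  · have hm1 : 1 ≤ mdeg a k := Nat.one_le_iff_ne_zero.mpr hm
    have h0 := N0_pos hk
    have key := key_identity hk
    have hN0 : (N0 a k : ℝ) ≠ 0 := Nat.cast_ne_zero.mpr (by omega)
    have hden : (0:ℝ) < (2 * k + 2 : ℝ) - 2 * (mdeg a k : ℝ) := by
      have : (2 * (mdeg a k : ℝ) + 2) < 2 * (k:ℝ) + 2 := by exact_mod_cast hk
      linarith
    have hcast : (N1 a k : ℝ) * ((2 * k + 2 : ℝ) - 2 * (mdeg a k : ℝ))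
        = (N0 a k : ℝ) * ((mdeg a k : ℝ) * (mdeg a k : ℝ)) := by
      have := congrArg (Nat.cast : ℕ → ℝ) key
      push_cast [Nat.cast_sub (show 2 * mdeg a k ≤ 2*k + 2 by omega)] at this
      convert this using 2 <;> ring
    rw [div_eq_div_iff hN0 hden.ne']
    nlinarith [hcast]

theorem edge_count_ratio' (ha : 0 < a) :
    Tendsto (fun k => (N1 a k : ℝ) / (N0 a k : ℝ)) atTop (nhds a) := by
  set u : ℕ → ℝ := fun k => Real.sqrt (a * (2*(k:ℝ)+2)) / (2*(k:ℝ)+2) with hu_def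
  have hn : Tendsto (fun k : ℕ => (2*(k:ℝ)+2)) atTop atTop := by
    apply tendsto_atTop_add_const_right
    exact Tendsto.const_mul_atTop (by norm_num) tendsto_natCast_atTop_atTop
  have hsqt : Tendsto (fun k : ℕ => Real.sqrt (2*(k:ℝ)+2)) atTop atTop := by
    have h := (tendsto_rpow_atTop (show (0:ℝ) < 1/2 by norm_num)).comp hn
    apply h.congr
    intro k
    simp only [Function.comp_apply]
    rw [Real.sqrt_eq_rpow]
  have hu : Tendsto u atTop (nhds 0) := by
    have heq : ∀ k : ℕ, Real.sqrt a / Real.sqrt (2*(k:ℝ)+2) = u k := by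
      intro k
      have hpos : (0:ℝ) < 2*(k:ℝ)+2 := by positivity
      rw [hu_def]
      dsimp only
      rw [Real.sqrt_mul ha.le, div_eq_div_iff (by positivity) hpos.ne', mul_assoc,
        Real.mul_self_sqrt hpos.le]
    exact (Tendsto.div_atTop tendsto_const_nhds hsqt).congr heq
  have hg : Tendsto (fun k => a - 2 * u k) atTop (nhds a) := by
    have := (tendsto_const_nhds (x := a) (f := atTop)).sub (hu.const_mul (2:ℝ))
    simpa using this
  have hh : Tendsto (fun k => a / (1 - 2 * u k)) atTop (nhds a) := by
    have := Tendsto.div (tendsto_const_nhds (x := a))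
      ((tendsto_const_nhds (x := (1:ℝ)) (f := atTop)).sub (hu.const_mul (2:ℝ)))
      (show (1:ℝ) - 2*0 ≠ 0 by norm_num)
    simpa [Pi.div_def] using this
  have hev1 : ∀ᶠ k : ℕ in atTop, u k < 1/8 := hu.eventually_lt_const (by norm_num)
  have hev2 : ∀ᶠ k : ℕ in atTop, (16:ℝ) ≤ 2*(k:ℝ)+2 := hn.eventually_ge_atTop 16
  have hev3 : ∀ᶠ k : ℕ in atTop, 1 ≤ a * (2*(k:ℝ)+2) :=
    (Tendsto.const_mul_atTop ha hn).eventually_ge_atTop 1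
  have hboth : ∀ᶠ k : ℕ in atTop,
      (a - 2 * u k ≤ (N1 a k : ℝ) / (N0 a k : ℝ)) ∧
        ((N1 a k : ℝ) / (N0 a k : ℝ) ≤ a / (1 - 2 * u k)) := by
    filter_upwards [hev1, hev2, hev3] with k h8 h16 h1an
    have huk : u k = Real.sqrt (a*(2*(k:ℝ)+2)) / (2*(k:ℝ)+2) := by rw [hu_def]
    have hm_le : ((mdeg a k : ℕ) : ℝ) ≤ Real.sqrt (a*(2*(k:ℝ)+2)) :=
      Nat.floor_le (Real.sqrt_nonneg _)
    have hm_ge : Real.sqrt (a*(2*(k:ℝ)+2)) - 1 ≤ ((mdeg a k : ℕ) : ℝ) := by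
      have h : Real.sqrt (a*(2*(k:ℝ)+2)) < ((mdeg a k : ℕ) : ℝ) + 1 :=
        Nat.lt_floor_add_one (Real.sqrt (a*(2*(k:ℝ)+2)))
      linarith
    set n : ℝ := 2*(k:ℝ)+2 with hn_def
    set s : ℝ := Real.sqrt (a*n) with hs_def
    set m : ℝ := ((mdeg a k : ℕ) : ℝ) with hm_def
    have hn0 : (0:ℝ) < n := by linarith
    have hs0 : (0:ℝ) ≤ s := Real.sqrt_nonneg _
    have hs2 : s^2 = a*n := Real.sq_sqrt (by linarith)
    have hs1 : (1:ℝ) ≤ s := by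
      rw [hs_def]
      rw [show (1:ℝ) = Real.sqrt 1 from (Real.sqrt_one).symm]
      exact Real.sqrt_le_sqrt (by linarith)
    have hsun : u k * n = s := by
      rw [huk, hn_def]
      exact div_mul_cancel₀ _ (by positivity)
    have h2s : 2*s < n/4 := by nlinarith [hsun, h8, hn0]
    have hreal : 2*m + 2 < n := by nlinarith [hm_le, h2s, h16]
    have hklt : 2 * mdeg a k + 2 < 2*k + 2 := by
      have : ((2 * mdeg a k + 2 : ℕ) : ℝ) < ((2*k+2 : ℕ) : ℝ) := by
        push_cast
        rw [hn_def] at hreal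
        rw [hm_def] at hreal
        push_cast at hreal
        linarith
      exact_mod_cast this
    have hfr := ratio_eq hklt
    rw [hfr]
    have hden : (0:ℝ) < n - 2*m := by linarith
    have hdenS : (0:ℝ) < n - 2*s := by linarith
    have hms : m^2 ≤ a*n := by nlinarith [hm_le, hs0]
    have hnum1 : a*n - 2*s ≤ m^2 := by nlinarith [hm_ge, hs1]
    constructor
    · have e1 : (a*n - 2*s)/n = a - 2*u k := by
        rw [← hsun]
        field_simp
      calc a - 2 * u k = (a*n - 2*s)/n := e1.symm
        _ ≤ m^2/(n - 2*m) := by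
            apply div_le_div₀ (by positivity) hnum1 hden (by linarith)
    · have e2 : (a*n)/(n - 2*s) = a/(1 - 2*u k) := by
        rw [← hsun, show n - 2*(u k*n) = n*(1 - 2*u k) from by ring,
          show a*n = n*a from mul_comm a n, mul_div_mul_left _ _ hn0.ne']
      calc m^2/(n - 2*m) ≤ (a*n)/(n - 2*s) := by
            apply div_le_div₀ (by linarith) hms hdenS (by linarith)
        _ = a/(1 - 2*u k) := e2
  exact tendsto_of_tendsto_of_tendsto_of_le_of_le' hg hh
    (hboth.mono fun k hk => hk.1) (hboth.mono fun k hk => hk.2)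

end Final

/-- For `n` even, `d = (m, m, 1, …, 1)` with `m = ⌊√(a n)⌋`, one has
`N₁/N₀ = m²/(n - 2m)` (for `n - 2m - 2 > 0`), and hence `N₁/N₀ → a` as `n → ∞`. -/
theorem edge_count_ratio (a : ℝ) (ha : 0 < a) :
    (∀ k : ℕ, 2 * mdeg a k + 2 < 2 * k + 2 →
      (N1 a k : ℝ) / (N0 a k : ℝ)
        = (mdeg a k : ℝ) ^ 2 / ((2 * k + 2 : ℝ) - 2 * (mdeg a k : ℝ))) ∧
    Tendsto (fun k => (N1 a k : ℝ) / (N0 a k : ℝ)) atTop (nhds a) := by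
  exact ⟨fun k hk => ratio_eq hk, edge_count_ratio' ha⟩
end

section
/- Assume Σ_{i=1}^n d_i = Θ(n) and Σ_{i=1}^n d_i² = O(n). Then for every fixed ℓ, m ≥ 0, the random variables X_2 (number of paths with 2 edges) and X_3 (number of paths with 3 edges) in the configuration model multigraph satisfy E[X_2^ℓ X_3^m] = O(n^{ℓ+m}). -/
open Finset Filter

abbrev HalfEdge (n : ℕ) (d : Fin n → ℕ) : Type := Σ i : Fin n, Fin (d i)

def IsConfig {n : ℕ} {d : Fin n → ℕ} (f : HalfEdge n d → HalfEdge n d) : Prop :=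
  (∀ x, f (f x) = x) ∧ (∀ x, f x ≠ x)

instance {n : ℕ} {d : Fin n → ℕ} : DecidablePred (IsConfig (n := n) (d := d)) := fun f => by
  unfold IsConfig; infer_instance

/-- Expectation, over a uniformly random configuration, of `g`. -/
noncomputable def expVal (n : ℕ) (d : Fin n → ℕ) (g : (HalfEdge n d → HalfEdge n d) → ℝ) : ℝ :=
  (∑ f : HalfEdge n d → HalfEdge n d, if IsConfig f then g f else 0) /
    (∑ f : HalfEdge n d → HalfEdge n d, if IsConfig f then (1 : ℝ) else 0)

/-- The number of paths with 2 edges (`P₂`-subgraphs) of the configuration multigraph: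
an ordered pair `(x, y)` of distinct half-edges at a common middle vertex whose
partners lie at two further distinct vertices represents such a path; each path is
counted twice. -/
def numP2 {n : ℕ} {d : Fin n → ℕ} (f : HalfEdge n d → HalfEdge n d) : ℕ :=
  (Finset.univ.filter fun p : HalfEdge n d × HalfEdge n d =>
    p.1.1 = p.2.1 ∧ p.1 ≠ p.2 ∧
    (f p.1).1 ≠ p.1.1 ∧ (f p.2).1 ≠ p.1.1 ∧ (f p.1).1 ≠ (f p.2).1).card / 2

/-- The number of paths with 3 edges (`P₃`-subgraphs) of the configuration multigraph,
with vertices `v₀ = (f x).1, v₁ = x.1 = y.1, v₂ = (f y).1 = z.1, v₃ = (f z).1` all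
distinct; each path is counted twice (once per direction). -/
def numP3 {n : ℕ} {d : Fin n → ℕ} (f : HalfEdge n d → HalfEdge n d) : ℕ :=
  (Finset.univ.filter fun t : HalfEdge n d × HalfEdge n d × HalfEdge n d =>
    t.1.1 = t.2.1.1 ∧ t.1 ≠ t.2.1 ∧ (f t.2.1).1 = t.2.2.1 ∧ t.2.2 ≠ f t.2.1 ∧
    (f t.1).1 ≠ t.1.1 ∧ (f t.1).1 ≠ t.2.2.1 ∧ (f t.1).1 ≠ (f t.2.2).1 ∧
    t.1.1 ≠ t.2.2.1 ∧ t.1.1 ≠ (f t.2.2).1 ∧ t.2.2.1 ≠ (f t.2.2).1).card / 2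

namespace CMaux

variable {n : ℕ} {d : Fin n → ℕ}

/-- set of configurations -/
def CF (n : ℕ) (d : Fin n → ℕ) : Finset (HalfEdge n d → HalfEdge n d) :=
  univ.filter IsConfig

/-- configs with forced values `f (y t) = z t` -/
def fib {m : ℕ} (y z : Fin m → HalfEdge n d) : Finset (HalfEdge n d → HalfEdge n d) :=
  (CF n d).filter fun f => ∀ t, f (y t) = z t

lemma config_inj {f : HalfEdge n d → HalfEdge n d} (hf : IsConfig f) :
    Function.Injective f := by
  intro a b h
  have := congrArg f h
  rwa [hf.1, hf.1] at this

lemma conj_config {f : HalfEdge n d → HalfEdge n d} (hf : IsConfig f)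
    (σ : HalfEdge n d → HalfEdge n d) (hσ : ∀ x, σ (σ x) = x) :
    IsConfig (fun x => σ (f (σ x))) := by
  constructor
  · intro x; simp only [hσ, hf.1]
  · intro x hx
    have : f (σ x) = σ x := by
      have := congrArg σ hx
      rwa [hσ] at this
    exact hf.2 _ this

lemma mem_fib {m : ℕ} {y z : Fin m → HalfEdge n d} {f : HalfEdge n d → HalfEdge n d} :
    f ∈ fib y z ↔ IsConfig f ∧ ∀ t, f (y t) = z t := by
  simp [fib, CF]

lemma mem_fib_cons {m : ℕ} {y z : Fin m → HalfEdge n d} {a b : HalfEdge n d}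
    {f : HalfEdge n d → HalfEdge n d} :
    f ∈ fib (Fin.cons a y) (Fin.cons b z) ↔ f ∈ fib y z ∧ f a = b := by
  simp only [mem_fib]
  constructor
  · rintro ⟨hc, h⟩
    refine ⟨⟨hc, fun t => ?_⟩, ?_⟩
    · have := h t.succ; simpa using this
    · have := h 0; simpa using this
  · rintro ⟨⟨hc, h⟩, ha⟩
    refine ⟨hc, fun t => ?_⟩
    refine Fin.cases ?_ ?_ t
    · simpa using ha
    · intro i; simpa using h i

lemma fib_cons_subset {m : ℕ} (y z : Fin m → HalfEdge n d) (a b : HalfEdge n d) :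
    fib (Fin.cons a y) (Fin.cons b z) ⊆ fib y z := fun f hf => (mem_fib_cons.1 hf).1

/-- Key counting inequality (conjugation argument). -/
lemma key_count {m : ℕ} (y z : Fin m → HalfEdge n d) (a b : HalfEdge n d)
    (hab : a ≠ b) (hya : ∀ t, y t ≠ a) (hza : ∀ t, z t ≠ a)
    (hyb : ∀ t, y t ≠ b) (hzb : ∀ t, z t ≠ b) :
    (Fintype.card (HalfEdge n d) - (2 * m + 1)) * (fib (Fin.cons a y) (Fin.cons b z)).card
      ≤ (fib y z).card := by
  classical
  set T : Finset (HalfEdge n d) :=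
    univ \ ((image y univ ∪ image z univ) ∪ {a}) with hT
  -- each fiber for b' ∈ T has card ≥ card of the b-fiber
  have hcardle : ∀ b' ∈ T, (fib (Fin.cons a y) (Fin.cons b z)).card
      ≤ (fib (Fin.cons a y) (Fin.cons b' z)).card := by
    intro b' hb'
    rw [hT] at hb'
    replace hb' := (@Finset.mem_sdiff ..).1 hb'
    simp only [mem_union, mem_image, mem_singleton, mem_univ, true_and,
      not_or, not_exists] at hb'
    have ha' : b' ≠ a := hb'.2
    have hy'' : ∀ t, y t ≠ b' := fun t h => hb'.1.1 t h
    have hz'' : ∀ t, z t ≠ b' := fun t h => hb'.1.2 t h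
    set σ : HalfEdge n d → HalfEdge n d := fun x => Equiv.swap b b' x with hσdef
    have hσ : ∀ x, σ (σ x) = x := fun x => Equiv.swap_apply_self _ _ _
    apply Finset.card_le_card_of_injOn (fun f => fun x => σ (f (σ x)))
    · intro f hf
      rw [Finset.mem_coe] at hf ⊢
      rw [mem_fib_cons] at hf ⊢
      obtain ⟨hfyz, hfa⟩ := hf
      rw [mem_fib] at hfyz
      obtain ⟨hc, hcon⟩ := hfyz
      refine ⟨mem_fib.2 ⟨conj_config hc σ hσ, fun t => ?_⟩, ?_⟩
      · show σ (f (σ (y t))) = z t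
        have h1 : σ (y t) = y t := Equiv.swap_apply_of_ne_of_ne (hyb t) (hy'' t)
        rw [h1, hcon t]
        exact Equiv.swap_apply_of_ne_of_ne (hzb t) (hz'' t)
      · show σ (f (σ a)) = b'
        have h1 : σ a = a := Equiv.swap_apply_of_ne_of_ne hab (fun h => ha' h.symm)
        rw [h1, hfa]
        exact Equiv.swap_apply_left _ _
    · intro f _ g _ h
      funext x
      have := congrArg (fun F : HalfEdge n d → HalfEdge n d => σ (F (σ x))) h
      simpa [hσ] using this
  have hdisj : ∀ b₁ ∈ T, ∀ b₂ ∈ T, b₁ ≠ b₂ →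
      Disjoint (fib (Fin.cons a y) (Fin.cons b₁ z)) (fib (Fin.cons a y) (Fin.cons b₂ z)) := by
    intro b₁ _ b₂ _ hne
    rw [Finset.disjoint_left]
    intro f h1 h2
    rw [mem_fib_cons] at h1 h2
    exact hne (h1.2.symm.trans h2.2)
  have hbu : (T.biUnion fun b' => fib (Fin.cons a y) (Fin.cons b' z)) ⊆ fib y z := by
    intro f hf
    rw [Finset.mem_biUnion] at hf
    obtain ⟨b', _, hf⟩ := hf
    exact fib_cons_subset _ _ _ _ hf
  have hsum : ∑ b' ∈ T, (fib (Fin.cons a y) (Fin.cons b' z)).card ≤ (fib y z).card := by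
    rw [← Finset.card_biUnion hdisj]
    exact Finset.card_le_card hbu
  have hTcard : Fintype.card (HalfEdge n d) - (2 * m + 1) ≤ T.card := by
    have h1 : ((image y univ ∪ image z univ) ∪ {a}).card ≤ 2 * m + 1 := by
      calc ((image y univ ∪ image z univ) ∪ {a}).card
          ≤ (image y univ ∪ image z univ).card + ({a} : Finset _).card :=
            Finset.card_union_le _ _
        _ ≤ ((image y univ).card + (image z univ).card) + 1 := by
            gcongr
            · exact Finset.card_union_le _ _
            · simp
        _ ≤ (m + m) + 1 := by
            gcongr <;> simpa using Finset.card_image_le.trans (by simp)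
        _ = 2 * m + 1 := by ring
    calc Fintype.card (HalfEdge n d) - (2 * m + 1)
        ≤ (univ : Finset (HalfEdge n d)).card - ((image y univ ∪ image z univ) ∪ {a}).card := by
          rw [card_univ]; omega
      _ ≤ T.card := by rw [hT]; exact (Finset.le_card_sdiff _ _)
  calc (Fintype.card (HalfEdge n d) - (2 * m + 1)) * (fib (Fin.cons a y) (Fin.cons b z)).card
      ≤ T.card * (fib (Fin.cons a y) (Fin.cons b z)).card := by gcongr
    _ ≤ ∑ b' ∈ T, (fib (Fin.cons a y) (Fin.cons b' z)).card := by
        rw [← smul_eq_mul, ← Finset.sum_const]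
        exact Finset.sum_le_sum hcardle
    _ ≤ (fib y z).card := hsum


/-- If the pair `(a,b)` touches the support of `(y,z)` without being one of its pairs,
the extended fiber is empty. -/
lemma fib_cons_eq_empty {m : ℕ} {y z : Fin m → HalfEdge n d} {a b : HalfEdge n d}
    (hq : ¬ ∃ t, (y t = a ∧ z t = b) ∨ (y t = b ∧ z t = a))
    (htouch : a = b ∨ ∃ t, y t = a ∨ z t = a ∨ y t = b ∨ z t = b) :
    fib (Fin.cons a y) (Fin.cons b z) = ∅ := by
  rw [Finset.eq_empty_iff_forall_notMem]
  intro f hf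
  rw [mem_fib_cons, mem_fib] at hf
  obtain ⟨⟨hc, hcon⟩, hfa⟩ := hf
  have hinv : ∀ x, f (f x) = x := hc.1
  rcases htouch with h | ⟨t, h⟩
  · exact hc.2 a (h ▸ hfa)
  rcases h with h | h | h | h
  · exact hq ⟨t, Or.inl ⟨h, by rw [← hcon t, h, hfa]⟩⟩
  · have : y t = b := by
      have h1 : f a = y t := by rw [← h, ← hcon t, hinv]
      rw [← h1, hfa]
    exact hq ⟨t, Or.inr ⟨this, h⟩⟩
  · have : z t = a := by rw [← hcon t, h, ← hfa, hinv]
    exact hq ⟨t, Or.inr ⟨h, this⟩⟩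
  · have : y t = a := config_inj hc (by rw [hcon t, h, hfa])
    exact hq ⟨t, Or.inl ⟨this, h⟩⟩

/-- weight of a half-edge: the degree of its vertex -/
def wgt (x : HalfEdge n d) : ℕ := d x.1

lemma wgt_mul_le (a b : HalfEdge n d) : wgt a * wgt b ≤ ∑ i, (d i)^2 := by
  rcases le_total (wgt a) (wgt b) with h | h
  · calc wgt a * wgt b ≤ wgt b * wgt b := by gcongr
      _ = (d b.1)^2 := by rw [sq]; rfl
      _ ≤ ∑ i, (d i)^2 :=
        Finset.single_le_sum (f := fun i => (d i)^2) (fun i _ => Nat.zero_le _) (mem_univ b.1)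
  · calc wgt a * wgt b ≤ wgt a * wgt a := by gcongr
      _ = (d a.1)^2 := by rw [sq]; rfl
      _ ≤ ∑ i, (d i)^2 :=
        Finset.single_le_sum (f := fun i => (d i)^2) (fun i _ => Nat.zero_le _) (mem_univ a.1)

lemma sum_wgt : ∑ x : HalfEdge n d, wgt x = ∑ i, (d i)^2 := by
  rw [← Finset.univ_sigma_univ, Finset.sum_sigma]
  refine Finset.sum_congr rfl fun i _ => ?_
  simp [wgt, sq]

/-- The per-pair step bound. -/
lemma step_q {m : ℕ} (y z : Fin m → HalfEdge n d) (q : HalfEdge n d × HalfEdge n d)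
    (hq : ¬ ∃ t, (y t = q.1 ∧ z t = q.2) ∨ (y t = q.2 ∧ z t = q.1)) :
    (Fintype.card (HalfEdge n d) - (2 * m + 1)) *
      (fib (Fin.cons q.1 y) (Fin.cons q.2 z)).card ≤ (fib y z).card := by
  by_cases h : q.1 = q.2 ∨ ∃ t, y t = q.1 ∨ z t = q.1 ∨ y t = q.2 ∨ z t = q.2
  · rw [fib_cons_eq_empty hq h]
    simp
  · push_neg at h
    obtain ⟨h1, h2⟩ := h
    exact key_count y z q.1 q.2 h1 (fun t => (h2 t).1) (fun t => (h2 t).2.1)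
      (fun t => (h2 t).2.2.1) (fun t => (h2 t).2.2.2)

/-- The main step sum estimate. -/
lemma step_sum {m : ℕ} (y z : Fin m → HalfEdge n d) :
    ∑ q : HalfEdge n d × HalfEdge n d,
      wgt q.1 * wgt q.2 * ((fib (Fin.cons q.1 y) (Fin.cons q.2 z)).card *
        (Fintype.card (HalfEdge n d) - (2 * m + 1)))
    ≤ (2 * m * (∑ i, (d i)^2) * (Fintype.card (HalfEdge n d) - (2 * m + 1))
        + (∑ i, (d i)^2)^2) * (fib y z).card := by
  classical
  set D := ∑ i, (d i)^2 with hD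
  set N' := Fintype.card (HalfEdge n d) - (2 * m + 1) with hN'
  set InA : HalfEdge n d × HalfEdge n d → Prop :=
    fun q => ∃ t, (y t = q.1 ∧ z t = q.2) ∨ (y t = q.2 ∧ z t = q.1) with hInA
  have hcard : (univ.filter InA).card ≤ 2 * m := by
    have hsub : univ.filter InA ⊆
        image (fun t => (y t, z t)) univ ∪ image (fun t => (z t, y t)) univ := by
      intro q hqmem
      rw [mem_filter] at hqmem
      obtain ⟨-, t, h | h⟩ := hqmem
      · exact Finset.mem_union_left _ (mem_image.2 ⟨t, mem_univ t, by
          rw [Prod.ext_iff]; exact ⟨h.1, h.2⟩⟩)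
      · exact Finset.mem_union_right _ (mem_image.2 ⟨t, mem_univ t, by
          rw [Prod.ext_iff]; exact ⟨h.2, h.1⟩⟩)
    calc (univ.filter InA).card ≤ _ := Finset.card_le_card hsub
      _ ≤ (image (fun t => (y t, z t)) univ).card + (image (fun t => (z t, y t)) univ).card :=
        Finset.card_union_le _ _
      _ ≤ m + m := by gcongr <;> exact Finset.card_image_le.trans (by simp)
      _ = 2 * m := by ring
  have hA : ∑ q ∈ univ.filter InA,
      wgt q.1 * wgt q.2 * ((fib (Fin.cons q.1 y) (Fin.cons q.2 z)).card * N')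
      ≤ 2 * m * D * N' * (fib y z).card := by
    have hterm : ∀ q ∈ univ.filter InA,
        wgt q.1 * wgt q.2 * ((fib (Fin.cons q.1 y) (Fin.cons q.2 z)).card * N')
        ≤ D * ((fib y z).card * N') := by
      intro q _
      have h1 : wgt q.1 * wgt q.2 ≤ D := wgt_mul_le _ _
      have h2 : (fib (Fin.cons q.1 y) (Fin.cons q.2 z)).card ≤ (fib y z).card :=
        Finset.card_le_card (fib_cons_subset _ _ _ _)
      exact Nat.mul_le_mul h1 (Nat.mul_le_mul_right _ h2)
    have h3 := Finset.sum_le_card_nsmul _ _ _ hterm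
    rw [smul_eq_mul] at h3
    have h4 : (univ.filter InA).card * (D * ((fib y z).card * N'))
        ≤ 2 * m * (D * ((fib y z).card * N')) := by gcongr
    have := h3.trans h4
    calc ∑ q ∈ univ.filter InA,
        wgt q.1 * wgt q.2 * ((fib (Fin.cons q.1 y) (Fin.cons q.2 z)).card * N')
        ≤ 2 * m * (D * ((fib y z).card * N')) := this
      _ = 2 * m * D * N' * (fib y z).card := by ring
  have hB : ∑ q ∈ univ.filter (fun q => ¬ InA q),
      wgt q.1 * wgt q.2 * ((fib (Fin.cons q.1 y) (Fin.cons q.2 z)).card * N')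
      ≤ D^2 * (fib y z).card := by
    have hterm : ∀ q ∈ univ.filter (fun q => ¬ InA q),
        wgt q.1 * wgt q.2 * ((fib (Fin.cons q.1 y) (Fin.cons q.2 z)).card * N')
        ≤ wgt q.1 * wgt q.2 * (fib y z).card := by
      intro q hqmem
      rw [mem_filter] at hqmem
      have hs := step_q y z q hqmem.2
      apply Nat.mul_le_mul_left
      calc (fib (Fin.cons q.1 y) (Fin.cons q.2 z)).card * N'
          = N' * (fib (Fin.cons q.1 y) (Fin.cons q.2 z)).card := by ring
        _ ≤ (fib y z).card := hs
    have h1 := Finset.sum_le_sum hterm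
    have h2 : ∑ q ∈ univ.filter (fun q => ¬ InA q), wgt q.1 * wgt q.2 * (fib y z).card
        ≤ ∑ q : HalfEdge n d × HalfEdge n d, wgt q.1 * wgt q.2 * (fib y z).card :=
      Finset.sum_le_sum_of_subset (Finset.filter_subset _ _)
    have h3 : ∑ q : HalfEdge n d × HalfEdge n d, wgt q.1 * wgt q.2 * (fib y z).card
        = ((∑ x : HalfEdge n d, wgt x) * (∑ x : HalfEdge n d, wgt x)) * (fib y z).card := by
      rw [Fintype.sum_prod_type, Finset.sum_mul_sum, Finset.sum_mul]
      exact Finset.sum_congr rfl fun a _ => by rw [Finset.sum_mul]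
    rw [h3, sum_wgt, ← hD, ← sq] at h2
    exact h1.trans h2
  calc ∑ q : HalfEdge n d × HalfEdge n d,
      wgt q.1 * wgt q.2 * ((fib (Fin.cons q.1 y) (Fin.cons q.2 z)).card * N')
      = (∑ q ∈ univ.filter InA,
          wgt q.1 * wgt q.2 * ((fib (Fin.cons q.1 y) (Fin.cons q.2 z)).card * N'))
        + ∑ q ∈ univ.filter (fun q => ¬ InA q),
          wgt q.1 * wgt q.2 * ((fib (Fin.cons q.1 y) (Fin.cons q.2 z)).card * N') :=
        (Finset.sum_filter_add_sum_filter_not univ InA _).symm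
    _ ≤ 2 * m * D * N' * (fib y z).card + D^2 * (fib y z).card := Nat.add_le_add hA hB
    _ = (2 * m * D * N' + D^2) * (fib y z).card := by ring


/-- The moment sum over forced-pair tuples. -/
def G (n : ℕ) (d : Fin n → ℕ) (m : ℕ) : ℕ :=
  ∑ y : Fin m → HalfEdge n d, ∑ z : Fin m → HalfEdge n d,
    ((∏ t, wgt (y t)) * (∏ t, wgt (z t))) * (fib y z).card

lemma fib_zero (y z : Fin 0 → HalfEdge n d) : fib y z = CF n d := by
  simp [fib]

lemma G_zero : G n d 0 = (CF n d).card := by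
  simp [G, fib_zero]

lemma sum_fn_succ {α M : Type*} [Fintype α] [DecidableEq α] [AddCommMonoid M] (m : ℕ)
    (F : (Fin (m+1) → α) → M) :
    ∑ y : Fin (m+1) → α, F y = ∑ a : α, ∑ y : Fin m → α, F (Fin.cons a y) := by
  have h := Fintype.sum_equiv (Fin.consEquiv (fun _ => α))
    (fun p => F ((Fin.consEquiv (fun _ => α)) p)) F (fun _ => rfl)
  rw [← h, Fintype.sum_prod_type]
  rfl

lemma reorder {α γ M : Type*} [Fintype α] [Fintype γ] [AddCommMonoid M]
    (T : α → γ → α → γ → M) :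
    (∑ a : α, ∑ y : γ, ∑ b : α, ∑ z : γ, T a y b z)
      = ∑ y : γ, ∑ z : γ, ∑ a : α, ∑ b : α, T a y b z := by
  rw [Finset.sum_comm]
  refine Finset.sum_congr rfl fun y _ => ?_
  calc ∑ a : α, ∑ b : α, ∑ z : γ, T a y b z
      = ∑ a : α, ∑ z : γ, ∑ b : α, T a y b z :=
        Finset.sum_congr rfl fun a _ => Finset.sum_comm
    _ = ∑ z : γ, ∑ a : α, ∑ b : α, T a y b z := Finset.sum_comm

lemma G_succ (m : ℕ) :
    G n d (m+1) * (Fintype.card (HalfEdge n d) - (2 * m + 1))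
      ≤ (2 * m * (∑ i, (d i)^2) * (Fintype.card (HalfEdge n d) - (2 * m + 1))
          + (∑ i, (d i)^2)^2) * G n d m := by
  classical
  set D := ∑ i, (d i)^2 with hD
  set N' := Fintype.card (HalfEdge n d) - (2 * m + 1) with hN'
  set A : (Fin m → HalfEdge n d) → ℕ := fun y => ∏ t, wgt (y t) with hA
  clear_value D N' A
  have expand : G n d (m+1) = ∑ a : HalfEdge n d, ∑ y : Fin m → HalfEdge n d,
      ∑ b : HalfEdge n d, ∑ z : Fin m → HalfEdge n d,
      ((wgt a * A y) * (wgt b * A z)) * (fib (Fin.cons a y) (Fin.cons b z)).card := by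
    rw [G, sum_fn_succ]
    refine Finset.sum_congr rfl fun a _ => ?_
    refine Finset.sum_congr rfl fun y _ => ?_
    rw [sum_fn_succ]
    refine Finset.sum_congr rfl fun b _ => ?_
    refine Finset.sum_congr rfl fun z _ => ?_
    simp [hA, Fin.prod_univ_succ]
  have e2 : G n d (m+1) = ∑ y : Fin m → HalfEdge n d, ∑ z : Fin m → HalfEdge n d,
      ∑ a : HalfEdge n d, ∑ b : HalfEdge n d,
      ((wgt a * A y) * (wgt b * A z)) * (fib (Fin.cons a y) (Fin.cons b z)).card := by
    rw [expand]
    exact reorder (fun a y b z => ((wgt a * A y) * (wgt b * A z)) * (fib (Fin.cons a y) (Fin.cons b z)).card)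
  have claim1 : ∀ y z : Fin m → HalfEdge n d,
      (∑ a : HalfEdge n d, ∑ b : HalfEdge n d,
        ((wgt a * A y) * (wgt b * A z)) * (fib (Fin.cons a y) (Fin.cons b z)).card) * N'
      = (A y * A z) * ∑ q : HalfEdge n d × HalfEdge n d,
          wgt q.1 * wgt q.2 * ((fib (Fin.cons q.1 y) (Fin.cons q.2 z)).card * N') := by
    intro y z
    rw [Fintype.sum_prod_type]
    simp only [Finset.sum_mul, Finset.mul_sum]
    refine Finset.sum_congr rfl fun a _ => Finset.sum_congr rfl fun b _ => ?_
    ring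
  have e3 : G n d (m+1) * N' = ∑ y : Fin m → HalfEdge n d, ∑ z : Fin m → HalfEdge n d,
      (A y * A z) * ∑ q : HalfEdge n d × HalfEdge n d,
        wgt q.1 * wgt q.2 * ((fib (Fin.cons q.1 y) (Fin.cons q.2 z)).card * N') := by
    rw [e2, Finset.sum_mul]
    refine Finset.sum_congr rfl fun y _ => ?_
    rw [Finset.sum_mul]
    exact Finset.sum_congr rfl fun z _ => claim1 y z
  rw [e3]
  calc ∑ y : Fin m → HalfEdge n d, ∑ z : Fin m → HalfEdge n d,
      (A y * A z) * ∑ q : HalfEdge n d × HalfEdge n d,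
        wgt q.1 * wgt q.2 * ((fib (Fin.cons q.1 y) (Fin.cons q.2 z)).card * N')
      ≤ ∑ y : Fin m → HalfEdge n d, ∑ z : Fin m → HalfEdge n d,
        (A y * A z) * ((2 * m * D * N' + D^2) * (fib y z).card) := by
        gcongr with y hy z hz
        have hstep := step_sum (d := d) y z
        rw [← hD, ← hN'] at hstep
        exact hstep
    _ = (2 * m * D * N' + D^2) * G n d m := by
        rw [G, Finset.mul_sum]
        apply Finset.sum_congr rfl
        intro y _
        rw [Finset.mul_sum]
        apply Finset.sum_congr rfl
        intro z _
        simp only [hA]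
        ring


/-- the dominating random variable for `numP3` -/
def W (f : HalfEdge n d → HalfEdge n d) : ℕ := ∑ x : HalfEdge n d, wgt x * wgt (f x)

lemma sum_pow_eq_G (m : ℕ) : ∑ f ∈ CF n d, (W f)^m = G n d m := by
  classical
  have h1 : ∀ f : HalfEdge n d → HalfEdge n d,
      (W f)^m = ∑ y : Fin m → HalfEdge n d, ∏ t, (wgt (y t) * wgt (f (y t))) := by
    intro f
    calc (W f)^m = ∏ _t : Fin m, (∑ x : HalfEdge n d, wgt x * wgt (f x)) := by
          rw [Finset.prod_const]; simp [W]
      _ = ∑ y ∈ Fintype.piFinset (fun _ : Fin m => (univ : Finset (HalfEdge n d))),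
            ∏ t, (wgt (y t) * wgt (f (y t))) := Finset.prod_univ_sum _ _
      _ = ∑ y : Fin m → HalfEdge n d, ∏ t, (wgt (y t) * wgt (f (y t))) := by
          rw [Fintype.piFinset_univ]
  calc ∑ f ∈ CF n d, (W f)^m
      = ∑ f ∈ CF n d, ∑ y : Fin m → HalfEdge n d, ∏ t, (wgt (y t) * wgt (f (y t))) :=
        Finset.sum_congr rfl fun f _ => h1 f
    _ = ∑ y : Fin m → HalfEdge n d, ∑ f ∈ CF n d, ∏ t, (wgt (y t) * wgt (f (y t))) :=
        Finset.sum_comm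
    _ = G n d m := by
        rw [G]
        apply Finset.sum_congr rfl
        intro y _
        have h2 : ∀ f ∈ CF n d, ∏ t, (wgt (y t) * wgt (f (y t)))
            = (∏ t, wgt (y t)) * ∏ t, wgt (f (y t)) := fun f _ => Finset.prod_mul_distrib
        rw [Finset.sum_congr rfl h2, ← Finset.mul_sum]
        have h3 : ∑ f ∈ CF n d, ∏ t, wgt (f (y t))
            = ∑ z : Fin m → HalfEdge n d, ∑ f ∈ (CF n d).filter
                (fun f => (fun t => f (y t)) = z), ∏ t, wgt (f (y t)) :=
          (Finset.sum_fiberwise (CF n d) (fun f => fun t => f (y t)) _).symm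
        rw [h3, Finset.mul_sum]
        apply Finset.sum_congr rfl
        intro z _
        have h4 : (CF n d).filter (fun f => (fun t => f (y t)) = z) = fib y z := by
          apply Finset.filter_congr
          intro f _
          simp [funext_iff]
        have h5 : ∀ f ∈ (CF n d).filter (fun f => (fun t => f (y t)) = z),
            ∏ t, wgt (f (y t)) = ∏ t, wgt (z t) := by
          intro f hf
          rw [Finset.mem_filter] at hf
          exact Finset.prod_congr rfl fun t _ => by rw [congrFun hf.2 t]
        rw [Finset.sum_congr rfl h5, Finset.sum_const, h4, smul_eq_mul]
        ring

lemma card_vert (i : Fin n) : (univ.filter fun x : HalfEdge n d => x.1 = i).card = d i := by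
  have h : (univ.filter fun x : HalfEdge n d => x.1 = i)
      = ({i} : Finset (Fin n)).sigma (fun _ => univ) := by
    ext x
    simp [Finset.mem_sigma]
  rw [h, Finset.card_sigma]
  simp

lemma numP2_le (f : HalfEdge n d → HalfEdge n d) : numP2 f ≤ ∑ i, (d i)^2 := by
  refine le_trans (Nat.div_le_self _ _) ?_
  have hsub : (Finset.univ.filter fun p : HalfEdge n d × HalfEdge n d =>
      p.1.1 = p.2.1 ∧ p.1 ≠ p.2 ∧
      (f p.1).1 ≠ p.1.1 ∧ (f p.2).1 ≠ p.1.1 ∧ (f p.1).1 ≠ (f p.2).1)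
      ⊆ Finset.univ.filter fun p : HalfEdge n d × HalfEdge n d => p.1.1 = p.2.1 := by
    intro p hp
    rw [Finset.mem_filter] at hp ⊢
    exact ⟨hp.1, hp.2.1⟩
  refine le_trans (Finset.card_le_card hsub) ?_
  rw [Finset.card_eq_sum_card_fiberwise
    (f := fun p : HalfEdge n d × HalfEdge n d => p.1) (t := univ) (fun x _ => mem_univ _)]
  rw [← sum_wgt (d := d)]
  apply Finset.sum_le_sum
  intro x _
  have hinj : ∀ p ∈ (Finset.univ.filter fun p : HalfEdge n d × HalfEdge n d =>
      p.1.1 = p.2.1).filter (fun p => p.1 = x), p.2 ∈ univ.filter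
        (fun q : HalfEdge n d => q.1 = x.1) := by
    intro p hp
    simp only [Finset.mem_filter] at hp ⊢
    exact ⟨mem_univ _, by rw [← hp.1.2, hp.2]⟩
  calc ((Finset.univ.filter fun p : HalfEdge n d × HalfEdge n d =>
        p.1.1 = p.2.1).filter (fun p => p.1 = x)).card
      ≤ (univ.filter (fun q : HalfEdge n d => q.1 = x.1)).card := by
        apply Finset.card_le_card_of_injOn (fun p => p.2) (fun p hp => hinj p hp)
        intro p hp q hq hpq
        simp only [Finset.mem_coe, Finset.mem_filter] at hp hq
        exact Prod.ext (hp.2.trans hq.2.symm) hpq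
    _ = wgt x := card_vert x.1

lemma numP3_le (f : HalfEdge n d → HalfEdge n d) : numP3 f ≤ W f := by
  refine le_trans (Nat.div_le_self _ _) ?_
  have hsub : (Finset.univ.filter fun t : HalfEdge n d × HalfEdge n d × HalfEdge n d =>
      t.1.1 = t.2.1.1 ∧ t.1 ≠ t.2.1 ∧ (f t.2.1).1 = t.2.2.1 ∧ t.2.2 ≠ f t.2.1 ∧
      (f t.1).1 ≠ t.1.1 ∧ (f t.1).1 ≠ t.2.2.1 ∧ (f t.1).1 ≠ (f t.2.2).1 ∧
      t.1.1 ≠ t.2.2.1 ∧ t.1.1 ≠ (f t.2.2).1 ∧ t.2.2.1 ≠ (f t.2.2).1)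
      ⊆ Finset.univ.filter fun t : HalfEdge n d × HalfEdge n d × HalfEdge n d =>
        t.1.1 = t.2.1.1 ∧ (f t.2.1).1 = t.2.2.1 := by
    intro t ht
    rw [Finset.mem_filter] at ht ⊢
    exact ⟨ht.1, ht.2.1, ht.2.2.2.1⟩
  refine le_trans (Finset.card_le_card hsub) ?_
  rw [Finset.card_eq_sum_card_fiberwise
    (f := fun t : HalfEdge n d × HalfEdge n d × HalfEdge n d => t.2.1) (t := univ)
    (fun x _ => mem_univ _)]
  rw [W]
  apply Finset.sum_le_sum
  intro y _
  have hmaps : ∀ t ∈ (Finset.univ.filter fun t : HalfEdge n d × HalfEdge n d × HalfEdge n d =>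
      t.1.1 = t.2.1.1 ∧ (f t.2.1).1 = t.2.2.1).filter (fun t => t.2.1 = y),
      (t.1, t.2.2) ∈ (univ.filter (fun q : HalfEdge n d => q.1 = y.1)) ×ˢ
        (univ.filter (fun q : HalfEdge n d => q.1 = (f y).1)) := by
    intro t ht
    simp only [Finset.mem_filter, Finset.mem_product] at ht ⊢
    obtain ⟨⟨-, h1, h2⟩, h3⟩ := ht
    refine ⟨⟨mem_univ _, ?_⟩, mem_univ _, ?_⟩
    · rw [h1, h3]
    · rw [← h2, h3]
  calc ((Finset.univ.filter fun t : HalfEdge n d × HalfEdge n d × HalfEdge n d =>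
        t.1.1 = t.2.1.1 ∧ (f t.2.1).1 = t.2.2.1).filter (fun t => t.2.1 = y)).card
      ≤ ((univ.filter (fun q : HalfEdge n d => q.1 = y.1)) ×ˢ
          (univ.filter (fun q : HalfEdge n d => q.1 = (f y).1))).card := by
        apply Finset.card_le_card_of_injOn (fun t => (t.1, t.2.2)) (fun t ht => hmaps t ht)
        intro s hs t ht hst
        simp only [Finset.mem_coe, Finset.mem_filter] at hs ht
        rw [Prod.ext_iff] at hst
        exact Prod.ext hst.1 (Prod.ext (hs.2.trans ht.2.symm) hst.2)
    _ = wgt y * wgt (f y) := by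
        rw [Finset.card_product, card_vert, card_vert]; rfl

/-- `expVal` is at most `B` provided the numerator is at most `B` times the denominator. -/
lemma expVal_le {g : (HalfEdge n d → HalfEdge n d) → ℝ} {B : ℝ} (hB : 0 ≤ B)
    (hnum : ∑ f ∈ CF n d, g f ≤ B * (CF n d).card) : expVal n d g ≤ B := by
  unfold expVal
  have hden : (∑ f : HalfEdge n d → HalfEdge n d, if IsConfig f then (1:ℝ) else 0)
      = ((CF n d).card : ℝ) := by
    rw [Finset.sum_boole]; rfl
  have hnum' : (∑ f : HalfEdge n d → HalfEdge n d, if IsConfig f then g f else 0)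
      = ∑ f ∈ CF n d, g f := (Finset.sum_filter _ _).symm
  rw [hden, hnum']
  rcases Nat.eq_zero_or_pos (CF n d).card with h | h
  · have hCF : CF n d = ∅ := Finset.card_eq_zero.1 h
    rw [hCF]
    simp [hB]
  · rw [div_le_iff₀ (by exact_mod_cast h)]
    exact hnum


lemma numP2_le_card (f : HalfEdge n d → HalfEdge n d) :
    numP2 f ≤ (Fintype.card (HalfEdge n d))^2 := by
  calc numP2 f ≤ _ := Nat.div_le_self _ _
    _ ≤ (univ : Finset (HalfEdge n d × HalfEdge n d)).card := Finset.card_filter_le _ _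
    _ = (Fintype.card (HalfEdge n d))^2 := by
        rw [Finset.card_univ, Fintype.card_prod]; ring

lemma numP3_le_card (f : HalfEdge n d → HalfEdge n d) :
    numP3 f ≤ (Fintype.card (HalfEdge n d))^3 := by
  calc numP3 f ≤ _ := Nat.div_le_self _ _
    _ ≤ (univ : Finset (HalfEdge n d × HalfEdge n d × HalfEdge n d)).card :=
        Finset.card_filter_le _ _
    _ = (Fintype.card (HalfEdge n d))^3 := by
        rw [Finset.card_univ, Fintype.card_prod, Fintype.card_prod]; ring

lemma card_halfEdge : (Fintype.card (HalfEdge n d) : ℝ) = ∑ i, (d i : ℝ) := by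
  rw [Fintype.card_sigma]
  simp only [Fintype.card_fin]
  push_cast
  rfl

end CMaux

set_option maxHeartbeats 1600000 in
open CMaux in
/-- If `∑ d i = Θ(n)` and `∑ d i² = O(n)`, then `E[X₂^ℓ X₃^m] = O(n^{ℓ+m})` for every
fixed `ℓ, m ≥ 0`, where `X₂, X₃` are the numbers of 2- and 3-edge paths. -/
theorem path_count_moments
    (d : (n : ℕ) → Fin n → ℕ) (hEven : ∀ n, Even (∑ i, d n i))
    (c C : ℝ) (hc : 0 < c) (hC : 0 < C)
    (hlow : ∀ n : ℕ, c * n ≤ ∑ i, (d n i : ℝ))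
    (hup : ∀ n : ℕ, ∑ i, (d n i : ℝ) ≤ C * n)
    (hsq : ∀ n : ℕ, ∑ i, (d n i : ℝ) ^ 2 ≤ C * n) :
    ∀ ℓ m : ℕ, ∃ C' : ℝ, 0 < C' ∧ ∀ n : ℕ,
      expVal n (d n) (fun f => (numP2 f : ℝ) ^ ℓ * (numP3 f : ℝ) ^ m)
        ≤ C' * (n : ℝ) ^ (ℓ + m) := by
  intro ℓ m
  set K : ℝ := 2 * m * C + 2 * C^2 / c + 1 with hK
  have hK0 : 0 < K := by positivity
  set n₀ : ℕ := ⌈(4 * (m:ℝ) + 4) / c⌉₊ + 1 with hn₀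
  have hcn₀ : (4 * (m:ℝ) + 4) ≤ c * n₀ := by
    have h1 : (4 * (m:ℝ) + 4) / c ≤ n₀ := by
      calc (4 * (m:ℝ) + 4) / c ≤ (⌈(4 * (m:ℝ) + 4) / c⌉₊ : ℝ) := Nat.le_ceil _
        _ ≤ n₀ := by rw [hn₀]; push_cast; linarith
    calc (4 * (m:ℝ) + 4) = c * ((4 * (m:ℝ) + 4) / c) := by field_simp
      _ ≤ c * n₀ := by gcongr
  refine ⟨C^(2*ℓ+3*m) * (n₀:ℝ)^(ℓ+2*m) + C^ℓ * K^m + 1, by positivity, fun n => ?_⟩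
  set N : ℕ := Fintype.card (HalfEdge n (d n)) with hNdef
  have hNcast : (N : ℝ) = ∑ i, (d n i : ℝ) := card_halfEdge
  have hNle : (N : ℝ) ≤ C * n := hNcast ▸ hup n
  have hNge : c * n ≤ (N : ℝ) := hNcast ▸ hlow n
  set D : ℕ := ∑ i, (d n i)^2 with hDdef
  have hDcast : (D : ℝ) = ∑ i, (d n i : ℝ)^2 := by rw [hDdef]; push_cast; rfl
  have hDle : (D : ℝ) ≤ C * n := hDcast ▸ hsq n
  have hD0 : (0:ℝ) ≤ D := Nat.cast_nonneg _
  have hstep0 : ∀ j : ℕ, G n (d n) (j+1) * (N - (2 * j + 1))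
      ≤ (2 * j * D * (N - (2 * j + 1)) + D^2) * G n (d n) j := by
    intro j
    have h := G_succ (n := n) (d := d n) j
    rw [← hNdef, ← hDdef] at h
    exact h
  clear_value N D
  by_cases hcase : n < n₀
  -- crude regime: small n
  · have hBle : ∀ f : HalfEdge n (d n) → HalfEdge n (d n), ((numP2 f : ℝ) ^ ℓ * (numP3 f : ℝ) ^ m)
        ≤ ((C*n)^2)^ℓ * ((C*n)^3)^m := by
      intro f
      have h2 : (numP2 f : ℝ) ≤ (C*n)^2 := by
        calc (numP2 f : ℝ) ≤ ((N:ℝ))^2 := by rw [hNdef]; exact_mod_cast numP2_le_card f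
          _ ≤ (C*n)^2 := by gcongr
      have h3 : (numP3 f : ℝ) ≤ (C*n)^3 := by
        calc (numP3 f : ℝ) ≤ ((N:ℝ))^3 := by rw [hNdef]; exact_mod_cast numP3_le_card f
          _ ≤ (C*n)^3 := by gcongr
      exact mul_le_mul (pow_le_pow_left₀ (Nat.cast_nonneg _) h2 ℓ)
        (pow_le_pow_left₀ (Nat.cast_nonneg _) h3 m) (by positivity) (by positivity)
    have hfin : expVal n (d n) (fun f => (numP2 f : ℝ) ^ ℓ * (numP3 f : ℝ) ^ m)
        ≤ ((C*n)^2)^ℓ * ((C*n)^3)^m := by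
      apply expVal_le (by positivity)
      calc ∑ f ∈ CF n (d n), ((numP2 f : ℝ) ^ ℓ * (numP3 f : ℝ) ^ m)
          ≤ ∑ _f ∈ CF n (d n), ((C*n)^2)^ℓ * ((C*n)^3)^m :=
            Finset.sum_le_sum fun f _ => hBle f
        _ = ((C*n)^2)^ℓ * ((C*n)^3)^m * ((CF n (d n)).card : ℝ) := by
            rw [Finset.sum_const, nsmul_eq_mul]; try ring
    refine hfin.trans ?_
    have hnn₀ : (n:ℝ) ≤ n₀ := by exact_mod_cast hcase.le
    calc ((C*n)^2)^ℓ * ((C*n)^3)^m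
        = C^(2*ℓ+3*m) * ((n:ℝ)^(ℓ+2*m) * (n:ℝ)^(ℓ+m)) := by
          rw [← pow_mul, ← pow_mul, ← pow_add, mul_pow]
          congr 1
          rw [← pow_add]
          congr 1
          omega
      _ ≤ C^(2*ℓ+3*m) * ((n₀:ℝ)^(ℓ+2*m) * (n:ℝ)^(ℓ+m)) := by
          gcongr
      _ ≤ (C^(2*ℓ+3*m) * (n₀:ℝ)^(ℓ+2*m) + C^ℓ * K^m + 1) * (n:ℝ)^(ℓ+m) := by
          rw [← mul_assoc]
          gcongr ?_ * _
          have h1 : (0:ℝ) ≤ C^ℓ * K^m := by positivity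
          linarith
  -- main regime: large n
  · push_neg at hcase
    have hn1 : 1 ≤ n := le_trans (by omega) hcase
    have hn0R : (0:ℝ) < n := by exact_mod_cast Nat.lt_of_lt_of_le Nat.zero_lt_one hn1
    have hcn : (4 * (m:ℝ) + 4) ≤ c * n := by
      refine hcn₀.trans ?_
      gcongr
    have hNbig : (4 * (m:ℝ) + 4) ≤ (N:ℝ) := hcn.trans hNge
    -- the inductive bound on G
    have claim : ∀ j, j ≤ m → (G n (d n) j : ℝ) ≤ (K * n)^j * ((CF n (d n)).card : ℝ) := by
      intro j
      induction j with
      | zero => intro _; rw [G_zero]; simp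
      | succ j ih =>
        intro hj
        have hjm : j ≤ m := Nat.le_of_succ_le hj
        have hjm' : (j:ℝ) ≤ m := by exact_mod_cast hjm
        have hGj := ih hjm
        have h2j : (2*j+1 : ℕ) ≤ N := by
          have : (2*(j:ℝ)+1) ≤ (N:ℝ) := by linarith
          exact_mod_cast this
        have hcast : ((N - (2*j+1) : ℕ) : ℝ) = (N:ℝ) - (2*(j:ℝ)+1) := by
          rw [Nat.cast_sub h2j]; push_cast; ring
        have hstepR : (G n (d n) (j+1) : ℝ) * ((N:ℝ) - (2*j+1))
            ≤ (2*j*(D:ℝ)*((N:ℝ)-(2*j+1)) + (D:ℝ)^2) * (G n (d n) j : ℝ) := by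
          have h' : ((G n (d n) (j+1) * (N - (2*j+1)) : ℕ) : ℝ)
              ≤ (((2*j*D*(N - (2*j+1)) + D^2) * G n (d n) j : ℕ) : ℝ) :=
            Nat.cast_le.2 (hstep0 j)
          push_cast [hcast] at h'
          nlinarith [h']
        have hN'ge : c*n/2 ≤ (N:ℝ) - (2*j+1) := by linarith
        have hN'pos : (0:ℝ) < (N:ℝ) - (2*j+1) := lt_of_lt_of_le (by positivity) hN'ge
        have h5 : (G n (d n) (j+1) : ℝ)
            ≤ (2*j*(D:ℝ) + (D:ℝ)^2/((N:ℝ)-(2*j+1))) * (G n (d n) j : ℝ) := by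
          rw [← mul_le_mul_iff_of_pos_right hN'pos]
          calc (G n (d n) (j+1) : ℝ) * ((N:ℝ)-(2*j+1))
              ≤ (2*j*(D:ℝ)*((N:ℝ)-(2*j+1)) + (D:ℝ)^2) * (G n (d n) j : ℝ) := hstepR
            _ = (2*j*(D:ℝ) + (D:ℝ)^2/((N:ℝ)-(2*j+1))) * (G n (d n) j : ℝ)
                  * ((N:ℝ)-(2*j+1)) := by
                field_simp
                try ring
        have h7 : 2*(j:ℝ)*(D:ℝ) + (D:ℝ)^2/((N:ℝ)-(2*j+1)) ≤ K * n := by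
          have hA1 : 2*(j:ℝ)*(D:ℝ) ≤ 2*(m:ℝ)*(C*n) := by
            have h0 : (0:ℝ) ≤ (j:ℝ) := Nat.cast_nonneg _
            nlinarith
          have hA2 : (D:ℝ)^2/((N:ℝ)-(2*j+1)) ≤ 2*C^2/c * n := by
            have h8 : (D:ℝ)^2 ≤ (C*n)^2 := pow_le_pow_left₀ hD0 hDle 2
            have h9 : (D:ℝ)^2/((N:ℝ)-(2*j+1)) ≤ (C*n)^2/(c*n/2) :=
              div_le_div₀ (by positivity) h8 (by positivity) hN'ge
            have h10 : (C*n)^2/(c*n/2) = 2*C^2/c * n := by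
              field_simp
            linarith
          have hcoef : (2*(m:ℝ)*C + 2*C^2/c) ≤ K := by rw [hK]; linarith
          calc 2*(j:ℝ)*(D:ℝ) + (D:ℝ)^2/((N:ℝ)-(2*j+1))
              ≤ 2*(m:ℝ)*(C*n) + 2*C^2/c * n := add_le_add hA1 hA2
            _ = (2*(m:ℝ)*C + 2*C^2/c) * n := by ring
            _ ≤ K * n := mul_le_mul_of_nonneg_right hcoef hn0R.le
        calc (G n (d n) (j+1) : ℝ)
            ≤ (2*j*(D:ℝ) + (D:ℝ)^2/((N:ℝ)-(2*j+1))) * (G n (d n) j : ℝ) := h5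
          _ ≤ (K*n) * (G n (d n) j : ℝ) :=
              mul_le_mul_of_nonneg_right h7 (Nat.cast_nonneg _)
          _ ≤ (K*n) * ((K * n)^j * ((CF n (d n)).card : ℝ)) := by
              have : (0:ℝ) ≤ K*n := by positivity
              exact mul_le_mul_of_nonneg_left hGj this
          _ = (K*n)^(j+1) * ((CF n (d n)).card : ℝ) := by ring
    -- conclude
    have hfin : expVal n (d n) (fun f => (numP2 f : ℝ) ^ ℓ * (numP3 f : ℝ) ^ m)
        ≤ (C*n)^ℓ * (K*n)^m := by
      apply expVal_le (by positivity)
      have hWsum : ∑ f ∈ CF n (d n), ((W f : ℝ))^m = ((G n (d n) m : ℕ) : ℝ) := by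
        rw [← sum_pow_eq_G]
        push_cast
        rfl
      calc ∑ f ∈ CF n (d n), ((numP2 f : ℝ) ^ ℓ * (numP3 f : ℝ) ^ m)
          ≤ ∑ f ∈ CF n (d n), (C*n)^ℓ * ((W f : ℝ))^m := by
            apply Finset.sum_le_sum
            intro f _
            have h2 : (numP2 f : ℝ) ≤ C*n := by
              calc (numP2 f : ℝ) ≤ (D:ℝ) := by rw [hDdef]; exact_mod_cast numP2_le f
                _ ≤ C*n := hDle
            have h3 : (numP3 f : ℝ) ≤ (W f : ℝ) := by exact_mod_cast numP3_le f
            exact mul_le_mul (pow_le_pow_left₀ (Nat.cast_nonneg _) h2 ℓ)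
              (pow_le_pow_left₀ (Nat.cast_nonneg _) h3 m) (by positivity) (by positivity)
        _ = (C*n)^ℓ * ((G n (d n) m : ℕ) : ℝ) := by
            rw [← Finset.mul_sum, hWsum]
        _ ≤ (C*n)^ℓ * ((K*n)^m * ((CF n (d n)).card : ℝ)) := by
            have h0 : (0:ℝ) ≤ (C*n)^ℓ := by positivity
            exact mul_le_mul_of_nonneg_left (claim m le_rfl) h0
        _ = (C*n)^ℓ * (K*n)^m * ((CF n (d n)).card : ℝ) := by ring
    refine hfin.trans ?_
    calc (C*n)^ℓ * (K*n)^m = C^ℓ * K^m * (n:ℝ)^(ℓ+m) := by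
          rw [mul_pow, mul_pow, pow_add]; ring
      _ ≤ (C^(2*ℓ+3*m) * (n₀:ℝ)^(ℓ+2*m) + C^ℓ * K^m + 1) * (n:ℝ)^(ℓ+m) := by
          gcongr ?_ * _
          have h1 : (0:ℝ) ≤ C^(2*ℓ+3*m) * (n₀:ℝ)^(ℓ+2*m) := by positivity
          linarith
end

section
/- Assume (1/n)Σ d_i → μ > 0, (1/n)Σ d_i² → μ₂, and max d_i = o(n^{1/2}). Let X̃_3 = Σ_{i<j} Σ_{α=1}^{d_i} Σ_{β=1}^{d_j} (d_i - 1)(d_j - 1) I_{iαjβ}, where I_{iαjβ} indicates half-edges i_α and j_β are matched in the random configuration. Then Var(X̃_3) = o(n²). -/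
open Finset Filter
set_option maxHeartbeats 1000000

variable {n : ℕ} {d : Fin n → ℕ}

def CC (n : ℕ) (d : Fin n → ℕ) : Finset (HalfEdge n d → HalfEdge n d) :=
  univ.filter IsConfig

lemma mem_CC {f : HalfEdge n d → HalfEdge n d} : f ∈ CC n d ↔ IsConfig f := by
  simp [CC]

lemma conj_config (σ : Equiv.Perm (HalfEdge n d)) {f : HalfEdge n d → HalfEdge n d}
    (hf : IsConfig f) : IsConfig (σ ∘ f ∘ σ.symm) := by
  constructor
  · intro x; simp [Function.comp, hf.1]
  · intro x hx
    apply hf.2 (σ.symm x)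
    have := congrArg σ.symm hx
    simpa [Function.comp] using this

/-- A configuration exists when the number of half-edges is even. -/
lemma config_exists (h : Even (Fintype.card (HalfEdge n d))) :
    ∃ f : HalfEdge n d → HalfEdge n d, IsConfig f := by
  obtain ⟨m, hm⟩ := h
  have e : HalfEdge n d ≃ Fin m × Fin 2 :=
    ((Fintype.equivFin _).trans (finCongr (by omega))).trans finProdFinEquiv.symm
  refine ⟨fun x => e.symm ((e x).1, (e x).2.rev), ?_, ?_⟩
  · intro x; simp
  · intro x hx
    have h2 : ((e x).1, (e x).2.rev) = e x := by
      have := congrArg e hx; simpa using this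
    have h3 : (e x).2.rev = (e x).2 := by
      have := congrArg Prod.snd h2; simpa using this
    have hb : ∀ b : Fin 2, b.rev ≠ b := by decide
    exact hb _ h3

lemma card_filter_conj (σ : Equiv.Perm (HalfEdge n d))
    (P Q : (HalfEdge n d → HalfEdge n d) → Prop) [DecidablePred P] [DecidablePred Q]
    (h : ∀ f, P f ↔ Q (σ ∘ f ∘ σ.symm)) :
    ((CC n d).filter P).card = ((CC n d).filter Q).card := by
  apply Finset.card_bij' (fun f _ => σ ∘ f ∘ σ.symm) (fun g _ => σ.symm ∘ g ∘ σ)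
  · intro f hf
    rw [mem_filter] at hf ⊢
    rw [mem_CC] at hf ⊢
    exact ⟨conj_config σ hf.1, (h f).mp hf.2⟩
  · intro g hg
    rw [mem_filter] at hg ⊢
    rw [mem_CC] at hg ⊢
    constructor
    · have := conj_config σ.symm (f := g) hg.1
      simpa using this
    · rw [h]
      have hg2 : σ ∘ (σ.symm ∘ g ∘ σ) ∘ σ.symm = g := by
        funext z; simp [Function.comp]
      rw [hg2]; exact hg.2
  · intro f _; funext z; simp [Function.comp]
  · intro g _; funext z; simp [Function.comp]

lemma count_const (x : HalfEdge n d) {y y' : HalfEdge n d} (hy : y ≠ x) (hy' : y' ≠ x) :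
    ((CC n d).filter (fun f => f x = y)).card = ((CC n d).filter (fun f => f x = y')).card := by
  rcases eq_or_ne y y' with rfl | hne
  · rfl
  apply card_filter_conj (Equiv.swap y y')
  intro f
  have hx : Equiv.swap y y' x = x :=
    Equiv.swap_apply_of_ne_of_ne (Ne.symm hy) (Ne.symm hy')
  constructor
  · intro hfx; simp [Function.comp, Equiv.symm_swap, hx, hfx]
  · intro hfx
    simp only [Function.comp_apply, Equiv.symm_swap, hx] at hfx
    have := congrArg (Equiv.swap y y') hfx
    simpa [Equiv.swap_apply_right] using this

lemma card_CC_eq_sum (x : HalfEdge n d) :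
    (CC n d).card = ∑ y ∈ univ.erase x, ((CC n d).filter (fun f => f x = y)).card := by
  apply Finset.card_eq_sum_card_fiberwise (s := CC n d) (t := univ.erase x)
    (f := fun f => f x)
  intro f hf
  exact mem_erase.mpr ⟨(mem_CC.mp hf).2 x, mem_univ _⟩

lemma count_mul_card (x y : HalfEdge n d) (h : y ≠ x) :
    ((CC n d).filter (fun f => f x = y)).card * (Fintype.card (HalfEdge n d) - 1)
      = (CC n d).card := by
  rw [card_CC_eq_sum x]
  rw [Finset.sum_congr rfl (fun y' hy' => count_const x (mem_erase.mp hy').1 h),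
    Finset.sum_const, smul_eq_mul,
    Finset.card_erase_of_mem (mem_univ _), Finset.card_univ, mul_comm]

lemma count2_const (x y u : HalfEdge n d)
    {v v' : HalfEdge n d} (hv : v ≠ x ∧ v ≠ y ∧ v ≠ u) (hv' : v' ≠ x ∧ v' ≠ y ∧ v' ≠ u) :
    ((CC n d).filter (fun f => f x = y ∧ f u = v)).card
      = ((CC n d).filter (fun f => f x = y ∧ f u = v')).card := by
  rcases eq_or_ne v v' with rfl | hne
  · rfl
  apply card_filter_conj (Equiv.swap v v')
  intro f
  have hx : Equiv.swap v v' x = x := Equiv.swap_apply_of_ne_of_ne (Ne.symm hv.1) (Ne.symm hv'.1)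
  have hy : Equiv.swap v v' y = y :=
    Equiv.swap_apply_of_ne_of_ne (Ne.symm hv.2.1) (Ne.symm hv'.2.1)
  have hu : Equiv.swap v v' u = u :=
    Equiv.swap_apply_of_ne_of_ne (Ne.symm hv.2.2) (Ne.symm hv'.2.2)
  have hinj := (Equiv.swap v v').injective
  constructor
  · rintro ⟨h1, h2⟩
    refine ⟨?_, ?_⟩
    · simp [Function.comp, Equiv.symm_swap, hx, h1, hy]
    · simp [Function.comp, Equiv.symm_swap, hu, h2, Equiv.swap_apply_left]
  · rintro ⟨h1, h2⟩
    simp only [Function.comp_apply, Equiv.symm_swap, hx, hu] at h1 h2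
    constructor
    · apply hinj; rw [h1, hy]
    · apply hinj; rw [h2, Equiv.swap_apply_left]

lemma card_cond_eq_sum (x y u : HalfEdge n d) (hyx : y ≠ x) (hux : u ≠ x) (huy : u ≠ y) :
    ((CC n d).filter (fun f => f x = y)).card
      = ∑ v ∈ ((univ.erase x).erase y).erase u,
          ((CC n d).filter (fun f => f x = y ∧ f u = v)).card := by
  have h := Finset.card_eq_sum_card_fiberwise
    (s := (CC n d).filter (fun f => f x = y)) (t := ((univ.erase x).erase y).erase u)
    (f := fun f => f u) ?_
  · rw [h]
    refine Finset.sum_congr rfl (fun v _ => ?_)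
    rw [Finset.filter_filter]
  · intro f hf
    rw [Finset.mem_coe, mem_filter, mem_CC] at hf
    obtain ⟨⟨hinv, hnf⟩, hfx⟩ := hf
    have hfinj : Function.Injective f := by
      intro a b hab
      have := congrArg f hab
      rwa [hinv, hinv] at this
    refine mem_erase.mpr ⟨?_, mem_erase.mpr ⟨?_, mem_erase.mpr ⟨?_, mem_univ _⟩⟩⟩
    · exact hnf u
    · intro h
      have h2 : f (f u) = f y := congrArg f h
      rw [hinv] at h2
      have hy2 : f y = x := by rw [← hfx, hinv]
      exact hux (h2.trans hy2)
    · intro h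
      have h2 : f (f u) = f x := congrArg f h
      rw [hinv, hfx] at h2
      exact huy h2

lemma count2_mul (x y u v : HalfEdge n d) (hyx : y ≠ x) (hux : u ≠ x) (huy : u ≠ y)
    (hvx : v ≠ x) (hvy : v ≠ y) (hvu : v ≠ u) :
    ((CC n d).filter (fun f => f x = y ∧ f u = v)).card * (Fintype.card (HalfEdge n d) - 3)
      = ((CC n d).filter (fun f => f x = y)).card := by
  rw [card_cond_eq_sum x y u hyx hux huy]
  have heq : ∀ v' ∈ ((univ.erase x).erase y).erase u,
      ((CC n d).filter (fun f => f x = y ∧ f u = v')).card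
        = ((CC n d).filter (fun f => f x = y ∧ f u = v)).card := by
    intro v' hv'
    have h1 := mem_erase.mp hv'
    have h2 := mem_erase.mp h1.2
    have h3 := mem_erase.mp h2.2
    exact count2_const x y u ⟨h3.1, h2.1, h1.1⟩ ⟨hvx, hvy, hvu⟩
  rw [Finset.sum_congr rfl heq, Finset.sum_const, smul_eq_mul]
  have hcard : (((univ.erase x).erase y).erase u).card
      = Fintype.card (HalfEdge n d) - 3 := by
    rw [Finset.card_erase_of_mem (mem_erase.mpr ⟨huy, mem_erase.mpr ⟨hux, mem_univ _⟩⟩),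
      Finset.card_erase_of_mem (mem_erase.mpr ⟨hyx, mem_univ _⟩),
      Finset.card_erase_of_mem (mem_univ _), Finset.card_univ]
    omega
  rw [hcard, mul_comm]

/-- The overcount `X̃₃ = ∑_{i<j} ∑_{α,β} (dᵢ-1)(dⱼ-1) I_{iαjβ}`, summing over matched
pairs of half-edges `x`, `y` with `x.1 < y.1`. -/
noncomputable def X3tilde (n : ℕ) (d : Fin n → ℕ) (f : HalfEdge n d → HalfEdge n d) : ℝ :=
  ∑ x : HalfEdge n d, ∑ y : HalfEdge n d,
    if x.1 < y.1 ∧ f x = y then ((d x.1 : ℝ) - 1) * ((d y.1 : ℝ) - 1) else 0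

/-- The variance of `X̃₃` over a uniformly random configuration. -/
noncomputable def varX3tilde (n : ℕ) (d : Fin n → ℕ) : ℝ :=
  expVal n d (fun f => (X3tilde n d f) ^ 2) - (expVal n d (X3tilde n d)) ^ 2

def PP (n : ℕ) (d : Fin n → ℕ) : Finset (HalfEdge n d × HalfEdge n d) :=
  univ.filter (fun p => p.1.1 < p.2.1)

noncomputable def wt (n : ℕ) (d : Fin n → ℕ) (p : HalfEdge n d × HalfEdge n d) : ℝ :=
  ((d p.1.1 : ℝ) - 1) * ((d p.2.1 : ℝ) - 1)

def cnt1 (n : ℕ) (d : Fin n → ℕ) (p : HalfEdge n d × HalfEdge n d) : ℕ :=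
  ((CC n d).filter (fun f => f p.1 = p.2)).card

def cnt2 (n : ℕ) (d : Fin n → ℕ) (p q : HalfEdge n d × HalfEdge n d) : ℕ :=
  ((CC n d).filter (fun f => f p.1 = p.2 ∧ f q.1 = q.2)).card

lemma one_le_deg (x : HalfEdge n d) : 1 ≤ d x.1 := x.2.pos

lemma wt_nonneg (p : HalfEdge n d × HalfEdge n d) : 0 ≤ wt n d p := by
  have h1 := one_le_deg p.1
  have h2 := one_le_deg p.2
  have h1' : (1 : ℝ) ≤ d p.1.1 := by exact_mod_cast h1
  have h2' : (1 : ℝ) ≤ d p.2.1 := by exact_mod_cast h2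
  rw [wt]; nlinarith

lemma mem_PP {p : HalfEdge n d × HalfEdge n d} : p ∈ PP n d ↔ p.1.1 < p.2.1 := by
  simp [PP]

lemma PP_ne {p : HalfEdge n d × HalfEdge n d} (hp : p ∈ PP n d) : p.1 ≠ p.2 := by
  intro h
  exact absurd (mem_PP.mp hp) (by rw [h]; exact lt_irrefl _)

lemma expVal_eq (g : (HalfEdge n d → HalfEdge n d) → ℝ) :
    expVal n d g = (∑ f ∈ CC n d, g f) / ((CC n d).card : ℝ) := by
  rw [expVal, CC, Finset.sum_filter]
  congr 1
  rw [Finset.sum_boole]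

lemma X3tilde_eq (f : HalfEdge n d → HalfEdge n d) :
    X3tilde n d f = ∑ p ∈ PP n d, wt n d p * (if f p.1 = p.2 then 1 else 0) := by
  rw [X3tilde, PP, sum_filter]
  rw [show (∑ x : HalfEdge n d, ∑ y : HalfEdge n d,
      if x.1 < y.1 ∧ f x = y then ((d x.1 : ℝ) - 1) * ((d y.1 : ℝ) - 1) else 0)
    = ∑ p : HalfEdge n d × HalfEdge n d,
      (if p.1.1 < p.2.1 ∧ f p.1 = p.2 then ((d p.1.1 : ℝ) - 1) * ((d p.2.1 : ℝ) - 1) else 0)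
    from (Fintype.sum_prod_type (f := fun p : HalfEdge n d × HalfEdge n d =>
      if p.1.1 < p.2.1 ∧ f p.1 = p.2 then ((d p.1.1 : ℝ) - 1) * ((d p.2.1 : ℝ) - 1) else 0)).symm]
  refine Finset.sum_congr rfl fun p _ => ?_
  by_cases h1 : p.1.1 < p.2.1 <;> by_cases h2 : f p.1 = p.2 <;> simp [h1, h2, wt]

lemma ite_one_mul_ite_one (a b : Prop) [Decidable a] [Decidable b] :
    (if a then (1:ℝ) else 0) * (if b then 1 else 0) = if a ∧ b then 1 else 0 := by
  by_cases ha : a <;> by_cases hb : b <;> simp [ha, hb]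

lemma sum_CC_X3 :
    ∑ f ∈ CC n d, X3tilde n d f = ∑ p ∈ PP n d, wt n d p * (cnt1 n d p : ℝ) := by
  rw [Finset.sum_congr rfl (fun f _ => X3tilde_eq f), Finset.sum_comm]
  refine Finset.sum_congr rfl fun p _ => ?_
  rw [← Finset.mul_sum, cnt1, ← Finset.sum_boole]

lemma sum_CC_X3sq :
    ∑ f ∈ CC n d, (X3tilde n d f) ^ 2
      = ∑ p ∈ PP n d, ∑ q ∈ PP n d, wt n d p * wt n d q * (cnt2 n d p q : ℝ) := by
  have step : ∀ f, (X3tilde n d f) ^ 2 = ∑ p ∈ PP n d, ∑ q ∈ PP n d,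
      wt n d p * wt n d q * (if f p.1 = p.2 ∧ f q.1 = q.2 then (1:ℝ) else 0) := by
    intro f
    rw [X3tilde_eq, sq, Finset.sum_mul_sum]
    refine Finset.sum_congr rfl fun p _ => Finset.sum_congr rfl fun q _ => ?_
    rw [mul_mul_mul_comm, ite_one_mul_ite_one]
  rw [Finset.sum_congr rfl (fun f _ => step f), Finset.sum_comm]
  refine Finset.sum_congr rfl fun p _ => ?_
  rw [Finset.sum_comm]
  refine Finset.sum_congr rfl fun q _ => ?_
  rw [← Finset.mul_sum, cnt2, ← Finset.sum_boole]

lemma Z_pos (hE : Even (Fintype.card (HalfEdge n d))) : 0 < ((CC n d).card : ℝ) := by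
  obtain ⟨f, hf⟩ := config_exists hE
  exact_mod_cast Finset.card_pos.mpr ⟨f, mem_CC.mpr hf⟩

lemma cnt1_real {p : HalfEdge n d × HalfEdge n d} (hp : p.1 ≠ p.2) :
    (cnt1 n d p : ℝ) * ((Fintype.card (HalfEdge n d) : ℝ) - 1) = ((CC n d).card : ℝ) := by
  have hN1 : 1 ≤ Fintype.card (HalfEdge n d) := Fintype.card_pos_iff.mpr ⟨p.1⟩
  have h := count_mul_card p.1 p.2 (Ne.symm hp)
  have h2 := congrArg (Nat.cast : ℕ → ℝ) h
  push_cast [Nat.cast_sub hN1] at h2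
  exact h2

lemma cnt1_diag {p : HalfEdge n d × HalfEdge n d} : cnt2 n d p p = cnt1 n d p := by
  rw [cnt2, cnt1]
  congr 1
  apply Finset.filter_congr
  intro f _
  simp [and_self]

lemma cnt2_real (hN : 4 ≤ Fintype.card (HalfEdge n d)) {p q : HalfEdge n d × HalfEdge n d}
    (h12 : p.2 ≠ p.1) (hq1p1 : q.1 ≠ p.1) (hq1p2 : q.1 ≠ p.2)
    (hq2p1 : q.2 ≠ p.1) (hq2p2 : q.2 ≠ p.2) (hq12 : q.2 ≠ q.1) :
    (cnt2 n d p q : ℝ)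
        * (((Fintype.card (HalfEdge n d) : ℝ) - 3) * ((Fintype.card (HalfEdge n d) : ℝ) - 1))
      = ((CC n d).card : ℝ) := by
  have h1 := count2_mul p.1 p.2 q.1 q.2 h12 hq1p1 hq1p2 hq2p1 hq2p2 hq12
  have h2 := count_mul_card p.1 p.2 h12
  have h3 : cnt2 n d p q * (Fintype.card (HalfEdge n d) - 3)
      * (Fintype.card (HalfEdge n d) - 1) = (CC n d).card := by
    rw [cnt2, h1]; exact h2
  have h4 := congrArg (Nat.cast : ℕ → ℝ) h3
  have hc3 : ((Fintype.card (HalfEdge n d) - 3 : ℕ) : ℝ)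
      = (Fintype.card (HalfEdge n d) : ℝ) - 3 := by
    rw [Nat.cast_sub (le_trans (by norm_num) hN : 3 ≤ Fintype.card (HalfEdge n d))]; norm_num
  have hc1 : ((Fintype.card (HalfEdge n d) - 1 : ℕ) : ℝ)
      = (Fintype.card (HalfEdge n d) : ℝ) - 1 := by
    rw [Nat.cast_sub (le_trans (by norm_num) hN : 1 ≤ Fintype.card (HalfEdge n d))]; norm_num
  push_cast at h4
  rw [hc3, hc1] at h4
  rw [← h4]; ring

lemma cnt2_zero {p q : HalfEdge n d × HalfEdge n d} (hp : p ∈ PP n d) (hq : q ∈ PP n d)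
    (hpq : p ≠ q)
    (hshare : ¬(q.1 ≠ p.1 ∧ q.1 ≠ p.2 ∧ q.2 ≠ p.1 ∧ q.2 ≠ p.2)) : cnt2 n d p q = 0 := by
  rw [cnt2, Finset.card_eq_zero, Finset.filter_eq_empty_iff]
  intro f hf
  obtain ⟨hinv, hnf⟩ := mem_CC.mp hf
  have hfinj : Function.Injective f := by
    intro a b hab
    have := congrArg f hab
    rwa [hinv, hinv] at this
  rintro ⟨h1, h2⟩
  push_neg at hshare
  by_cases e1 : q.1 = p.1
  · rw [e1, h1] at h2
    exact hpq (Prod.ext e1 h2.symm).symm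
  by_cases e2 : q.1 = p.2
  · rw [e2, ← h1, hinv] at h2
    have hlt1 := mem_PP.mp hp
    have hlt2 := mem_PP.mp hq
    rw [e2, ← h2] at hlt2
    exact absurd (hlt1.trans hlt2) (lt_irrefl _)
  by_cases e3 : q.2 = p.1
  · rw [e3] at h2
    have h4 := congrArg f h2
    rw [hinv, h1] at h4
    exact e2 h4
  · have e4 := hshare e1 e2 e3
    rw [e4, ← h1] at h2
    exact e1 (hfinj h2)

lemma var_nonneg (hE : Even (Fintype.card (HalfEdge n d))) : 0 ≤ varX3tilde n d := by
  have hZ := Z_pos hE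
  rw [varX3tilde, expVal_eq, expVal_eq, sub_nonneg, div_pow]
  have key : (∑ f ∈ CC n d, X3tilde n d f) ^ 2
      ≤ ((CC n d).card : ℝ) * ∑ f ∈ CC n d, (X3tilde n d f) ^ 2 := by
    have h := Finset.sum_mul_sq_le_sq_mul_sq (CC n d) (fun _ => (1:ℝ)) (X3tilde n d)
    simpa using h
  calc (∑ f ∈ CC n d, X3tilde n d f) ^ 2 / ((CC n d).card : ℝ) ^ 2
      ≤ (((CC n d).card : ℝ) * ∑ f ∈ CC n d, (X3tilde n d f) ^ 2)
          / ((CC n d).card : ℝ) ^ 2 := by gcongr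
    _ = (∑ f ∈ CC n d, (X3tilde n d f) ^ 2) / ((CC n d).card : ℝ) := by
        rw [pow_two, mul_div_mul_left _ _ hZ.ne']

lemma T_le_S : ∑ x : HalfEdge n d, ((d x.1 : ℝ) - 1) ≤ ∑ i, (d i : ℝ)^2 := by
  rw [← Finset.univ_sigma_univ, Finset.sum_sigma]
  apply Finset.sum_le_sum
  intro i _
  have hconst : ∀ s : Fin (d i), ((d ((⟨i, s⟩ : HalfEdge n d)).1 : ℝ) - 1) = ((d i : ℝ) - 1) :=
    fun s => rfl
  rw [Finset.sum_congr rfl (fun s _ => hconst s), Finset.sum_const, Finset.card_univ,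
    Fintype.card_fin, nsmul_eq_mul]
  have : (0:ℝ) ≤ (d i : ℝ) := Nat.cast_nonneg _
  nlinarith

lemma T_nonneg : 0 ≤ ∑ x : HalfEdge n d, ((d x.1 : ℝ) - 1) := by
  apply Finset.sum_nonneg
  intro x _
  have := one_le_deg x
  have : (1:ℝ) ≤ d x.1 := by exact_mod_cast this
  linarith

lemma W_le_Ssq : ∑ p ∈ PP n d, wt n d p ≤ (∑ i, (d i : ℝ)^2)^2 := by
  have h1 : ∑ p ∈ PP n d, wt n d p ≤ ∑ p : HalfEdge n d × HalfEdge n d, wt n d p :=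
    Finset.sum_le_sum_of_subset_of_nonneg (Finset.filter_subset _ _)
      (fun p _ _ => wt_nonneg p)
  have h2 : ∑ p : HalfEdge n d × HalfEdge n d, wt n d p
      = (∑ x : HalfEdge n d, ((d x.1 : ℝ) - 1))^2 := by
    rw [sq, Finset.sum_mul_sum]
    exact Fintype.sum_prod_type (f := wt n d)
  calc ∑ p ∈ PP n d, wt n d p ≤ (∑ x : HalfEdge n d, ((d x.1 : ℝ) - 1))^2 := h1.trans_eq h2
    _ ≤ (∑ i, (d i : ℝ)^2)^2 := by
        apply pow_le_pow_left₀ T_nonneg T_le_S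

lemma wt_le_Msq (p : HalfEdge n d × HalfEdge n d) :
    wt n d p ≤ ((univ.sup d : ℕ) : ℝ)^2 := by
  have hM1 : ((d p.1.1 : ℝ) - 1) ≤ ((univ.sup d : ℕ) : ℝ) := by
    have : d p.1.1 ≤ univ.sup d := Finset.le_sup (mem_univ _)
    have : (d p.1.1 : ℝ) ≤ ((univ.sup d : ℕ) : ℝ) := by exact_mod_cast this
    linarith
  have hM2 : ((d p.2.1 : ℝ) - 1) ≤ ((univ.sup d : ℕ) : ℝ) := by
    have : d p.2.1 ≤ univ.sup d := Finset.le_sup (mem_univ _)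
    have : (d p.2.1 : ℝ) ≤ ((univ.sup d : ℕ) : ℝ) := by exact_mod_cast this
    linarith
  have hnn : (0:ℝ) ≤ (d p.2.1 : ℝ) - 1 := by
    have := one_le_deg p.2
    have : (1:ℝ) ≤ d p.2.1 := by exact_mod_cast this
    linarith
  have hMnn : (0:ℝ) ≤ ((univ.sup d : ℕ) : ℝ) := Nat.cast_nonneg _
  rw [wt, sq]
  exact mul_le_mul hM1 hM2 hnn hMnn

lemma sum_wtsq_le : ∑ p ∈ PP n d, (wt n d p)^2
    ≤ ((univ.sup d : ℕ) : ℝ)^2 * ∑ p ∈ PP n d, wt n d p := by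
  rw [Finset.mul_sum]
  apply Finset.sum_le_sum
  intro p _
  rw [sq]
  exact mul_le_mul_of_nonneg_right (wt_le_Msq p) (wt_nonneg p)

lemma var_bound (hE : Even (Fintype.card (HalfEdge n d)))
    (hN : 4 ≤ Fintype.card (HalfEdge n d)) :
    varX3tilde n d ≤
      ((univ.sup d : ℕ) : ℝ)^2 * (∑ i, (d i : ℝ)^2)^2 / ((Fintype.card (HalfEdge n d) : ℝ) - 1)
      + 2 * (∑ i, (d i : ℝ)^2)^4 /
        (((Fintype.card (HalfEdge n d) : ℝ) - 1)^2 * ((Fintype.card (HalfEdge n d) : ℝ) - 3)) := by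
  have hN4 : (4:ℝ) ≤ (Fintype.card (HalfEdge n d) : ℝ) := by exact_mod_cast hN
  set N : ℝ := (Fintype.card (HalfEdge n d) : ℝ) with hNdef
  have hA : (0:ℝ) < N - 1 := by linarith
  have hB : (0:ℝ) < N - 3 := by linarith
  have hZ : 0 < ((CC n d).card : ℝ) := Z_pos hE
  set Z : ℝ := ((CC n d).card : ℝ) with hZdef
  set W : ℝ := ∑ p ∈ PP n d, wt n d p with hW
  set S : ℝ := ∑ i, (d i : ℝ)^2 with hS
  set M : ℝ := ((univ.sup d : ℕ) : ℝ) with hM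
  set V : ℝ := ∑ p ∈ PP n d, (wt n d p)^2 with hV
  have hWnn : 0 ≤ W := Finset.sum_nonneg fun p _ => wt_nonneg p
  have hSnn : 0 ≤ S := Finset.sum_nonneg fun i _ => sq_nonneg _
  have hMnn : 0 ≤ M := Nat.cast_nonneg _
  -- first moment
  have hEX : expVal n d (X3tilde n d) = W * (1/(N-1)) := by
    rw [expVal_eq, sum_CC_X3]
    have hper : ∀ p ∈ PP n d, wt n d p * (cnt1 n d p : ℝ) = wt n d p * (Z/(N-1)) := by
      intro p hp
      congr 1
      rw [eq_div_iff hA.ne']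
      exact cnt1_real (PP_ne hp)
    rw [Finset.sum_congr rfl hper, ← Finset.sum_mul, ← hW]
    field_simp
    rw [← hZdef]
    ring_nf
    rw [mul_assoc, mul_inv_cancel₀ hZ.ne', mul_one]
  -- second moment
  have hEX2 : expVal n d (fun f => X3tilde n d f ^ 2)
      ≤ V * (1/(N-1)) + W^2 * (1/((N-1)*(N-3))) := by
    rw [expVal_eq, sum_CC_X3sq]
    have hper : ∀ p ∈ PP n d, ∀ q ∈ PP n d,
        wt n d p * wt n d q * (cnt2 n d p q : ℝ)
          ≤ wt n d p * wt n d q * (Z/((N-1)*(N-3)))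
            + (if p = q then wt n d p * wt n d q * (Z/(N-1)) else 0) := by
      intro p hp q hq
      have hwp := wt_nonneg (n := n) (d := d) p
      have hwq := wt_nonneg (n := n) (d := d) q
      by_cases hpq : p = q
      · subst hpq
        rw [if_pos rfl]
        have hc : (cnt2 n d p p : ℝ) = Z/(N-1) := by
          rw [eq_div_iff hA.ne', cnt1_diag]
          exact cnt1_real (PP_ne hp)
        rw [hc]
        have h0 : 0 ≤ wt n d p * wt n d p * (Z/((N-1)*(N-3))) := by positivity
        linarith
      · rw [if_neg hpq, add_zero]
        by_cases hsh : q.1 ≠ p.1 ∧ q.1 ≠ p.2 ∧ q.2 ≠ p.1 ∧ q.2 ≠ p.2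
        · have hc := cnt2_real hN (Ne.symm (PP_ne hp)) hsh.1 hsh.2.1 hsh.2.2.1 hsh.2.2.2
            (Ne.symm (PP_ne hq))
          have hc2 : (cnt2 n d p q : ℝ) = Z/((N-1)*(N-3)) := by
            rw [eq_div_iff (by positivity), hZdef, ← hc]; ring
          rw [hc2]
        · have hc := cnt2_zero hp hq hpq hsh
          rw [hc]
          have h0 : 0 ≤ wt n d p * wt n d q * (Z/((N-1)*(N-3))) := by positivity
          simpa using h0
    have hsum : ∑ p ∈ PP n d, ∑ q ∈ PP n d, wt n d p * wt n d q * (cnt2 n d p q : ℝ)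
        ≤ W^2 * (Z/((N-1)*(N-3))) + V * (Z/(N-1)) := by
      calc ∑ p ∈ PP n d, ∑ q ∈ PP n d, wt n d p * wt n d q * (cnt2 n d p q : ℝ)
          ≤ ∑ p ∈ PP n d, ∑ q ∈ PP n d, (wt n d p * wt n d q * (Z/((N-1)*(N-3)))
              + (if p = q then wt n d p * wt n d q * (Z/(N-1)) else 0)) :=
            Finset.sum_le_sum fun p hp => Finset.sum_le_sum fun q hq => hper p hp q hq
        _ = (∑ p ∈ PP n d, ∑ q ∈ PP n d, wt n d p * wt n d q * (Z/((N-1)*(N-3))))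
            + ∑ p ∈ PP n d, ∑ q ∈ PP n d,
                (if p = q then wt n d p * wt n d q * (Z/(N-1)) else 0) := by
            rw [← Finset.sum_add_distrib]
            exact Finset.sum_congr rfl fun p _ => Finset.sum_add_distrib
        _ = W^2 * (Z/((N-1)*(N-3))) + V * (Z/(N-1)) := by
            congr 1
            · have inner : ∀ p, ∑ q ∈ PP n d, wt n d p * wt n d q * (Z/((N-1)*(N-3)))
                  = (Z/((N-1)*(N-3)) * wt n d p) * W := by
                intro p
                rw [hW, Finset.mul_sum]
                exact Finset.sum_congr rfl fun q _ => by ring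
              rw [Finset.sum_congr rfl fun p _ => inner p, ← Finset.sum_mul,
                ← Finset.mul_sum, ← hW, sq]
              ring
            · have inner : ∀ p ∈ PP n d, ∑ q ∈ PP n d,
                  (if p = q then wt n d p * wt n d q * (Z/(N-1)) else 0)
                  = (wt n d p)^2 * (Z/(N-1)) := by
                intro p hp
                rw [Finset.sum_ite_eq (PP n d) p (fun q => wt n d p * wt n d q * (Z/(N-1))),
                  if_pos hp, sq]
              rw [Finset.sum_congr rfl inner, ← Finset.sum_mul, ← hV]
    calc (∑ p ∈ PP n d, ∑ q ∈ PP n d, wt n d p * wt n d q * (cnt2 n d p q : ℝ)) / Z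
        ≤ (W^2 * (Z/((N-1)*(N-3))) + V * (Z/(N-1))) / Z := by gcongr
      _ = V * (1/(N-1)) + W^2 * (1/((N-1)*(N-3))) := by
          field_simp
          ring
  have hvar : varX3tilde n d
      ≤ V * (1/(N-1)) + W^2 * (1/((N-1)*(N-3))) - (W * (1/(N-1)))^2 := by
    rw [varX3tilde, hEX]
    exact sub_le_sub_right hEX2 _
  have hkey : V * (1/(N-1)) + W^2 * (1/((N-1)*(N-3))) - (W * (1/(N-1)))^2
      = V * (1/(N-1)) + W^2 * (2/((N-1)^2*(N-3))) := by
    field_simp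
    ring
  have h1 : V ≤ M^2 * (S^2) := by
    have := sum_wtsq_le (n := n) (d := d)
    have h2 : W ≤ S^2 := W_le_Ssq
    calc V ≤ M^2 * W := this
      _ ≤ M^2 * S^2 := by
          apply mul_le_mul_of_nonneg_left h2 (by positivity)
  have h2 : W^2 ≤ (S^2)^2 := pow_le_pow_left₀ hWnn W_le_Ssq 2
  calc varX3tilde n d ≤ V * (1/(N-1)) + W^2 * (2/((N-1)^2*(N-3))) := hvar.trans_eq hkey
    _ ≤ (M^2 * S^2) * (1/(N-1)) + (S^2)^2 * (2/((N-1)^2*(N-3))) := by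
        apply add_le_add
        · exact mul_le_mul_of_nonneg_right h1 (by positivity)
        · exact mul_le_mul_of_nonneg_right h2 (by positivity)
    _ = M^2 * S^2 / (N-1) + 2 * S^4 / ((N-1)^2*(N-3)) := by ring

/-- Assume `(1/n) ∑ d i → μ > 0`, `(1/n) ∑ d i² → μ₂` and `max d i = o(√n)`.
Then `Var(X̃₃) = o(n²)`. -/
theorem variance_X3tilde_small
    (d : (n : ℕ) → Fin n → ℕ) (hEven : ∀ n, Even (∑ i, d n i))
    (μ μ₂ : ℝ) (hμ : 0 < μ)
    (h1 : Tendsto (fun n : ℕ => (∑ i, (d n i : ℝ)) / n) atTop (nhds μ))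
    (h2 : Tendsto (fun n : ℕ => (∑ i, (d n i : ℝ) ^ 2) / n) atTop (nhds μ₂))
    (hmax : Tendsto (fun n : ℕ => ((Finset.univ.sup (d n) : ℕ) : ℝ) / Real.sqrt n)
      atTop (nhds 0)) :
    Tendsto (fun n : ℕ => varX3tilde n (d n) / (n : ℝ) ^ 2) atTop (nhds 0) := by
  have hcardN : ∀ n, Fintype.card (HalfEdge n (d n)) = ∑ i, d n i := by
    intro n; simp [Fintype.card_sigma]
  have hcard : ∀ n, (Fintype.card (HalfEdge n (d n)) : ℝ) = ∑ i, (d n i : ℝ) := by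
    intro n; rw [hcardN n]; push_cast; rfl
  have hEvenCard : ∀ n, Even (Fintype.card (HalfEdge n (d n))) := fun n => by
    rw [hcardN n]; exact hEven n
  have h0' : Tendsto (fun n : ℕ => (1:ℝ)/n) atTop (nhds 0) :=
    tendsto_one_div_atTop_nhds_zero_nat
  have h3' : Tendsto (fun n : ℕ => (3:ℝ)/n) atTop (nhds 0) := by
    have := h0'.const_mul (3:ℝ)
    rw [mul_zero] at this
    exact this.congr fun n => by rw [mul_one_div]
  have ha1 : Tendsto (fun n : ℕ => ((∑ i, (d n i : ℝ)) - 1)/n) atTop (nhds μ) := by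
    have h := h1.sub h0'
    rw [sub_zero] at h
    exact h.congr fun n => (sub_div _ _ _).symm
  have ha3 : Tendsto (fun n : ℕ => ((∑ i, (d n i : ℝ)) - 3)/n) atTop (nhds μ) := by
    have h := h1.sub h3'
    rw [sub_zero] at h
    exact h.congr fun n => (sub_div _ _ _).symm
  have hL1 : Tendsto (fun n : ℕ => (n:ℝ)/((∑ i, (d n i : ℝ)) - 1)) atTop (nhds μ⁻¹) := by
    have h := ha1.inv₀ (ne_of_gt hμ)
    exact h.congr fun n => by rw [inv_div]
  have hL3 : Tendsto (fun n : ℕ => (n:ℝ)/((∑ i, (d n i : ℝ)) - 3)) atTop (nhds μ⁻¹) := by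
    have h := ha3.inv₀ (ne_of_gt hμ)
    exact h.congr fun n => by rw [inv_div]
  have haInf : Tendsto (fun n : ℕ => ∑ i, (d n i : ℝ)) atTop atTop := by
    have hlin : Tendsto (fun n : ℕ => (μ/2) * (n:ℝ)) atTop atTop :=
      Tendsto.const_mul_atTop (by linarith) tendsto_natCast_atTop_atTop
    apply tendsto_atTop_mono' atTop ?_ hlin
    filter_upwards [h1.eventually (eventually_gt_nhds (by linarith : μ/2 < μ)),
      eventually_ge_atTop 1] with n hn hn1
    have hnpos : (0:ℝ) < n := by exact_mod_cast hn1
    rw [lt_div_iff₀ hnpos] at hn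
    linarith
  have hN4 : ∀ᶠ n in atTop, 4 ≤ Fintype.card (HalfEdge n (d n)) := by
    filter_upwards [haInf.eventually_ge_atTop 4] with n hn
    have h := hcard n
    have : (4:ℝ) ≤ (Fintype.card (HalfEdge n (d n)) : ℝ) := by rw [h]; exact hn
    exact_mod_cast this
  -- first error term
  have hF1 : Tendsto (fun n : ℕ => ((univ.sup (d n) : ℕ) : ℝ)^2 * (∑ i, (d n i : ℝ)^2)^2
      / (((∑ i, (d n i : ℝ)) - 1) * (n:ℝ)^2)) atTop (nhds 0) := by
    have hlim : Tendsto (fun n : ℕ =>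
        (((univ.sup (d n) : ℕ) : ℝ) / Real.sqrt n)^2 * ((∑ i, (d n i : ℝ)^2) / n)^2
          * ((n:ℝ)/((∑ i, (d n i : ℝ)) - 1))) atTop (nhds ((0:ℝ)^2 * μ₂^2 * μ⁻¹)) :=
      ((hmax.pow 2).mul (h2.pow 2)).mul hL1
    rw [show (0:ℝ)^2 * μ₂^2 * μ⁻¹ = 0 by ring] at hlim
    apply hlim.congr'
    filter_upwards [eventually_ge_atTop 1] with n hn1
    have hnpos : (0:ℝ) < n := by exact_mod_cast hn1
    have hsq : Real.sqrt n ^ 2 = (n:ℝ) := Real.sq_sqrt hnpos.le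
    rcases eq_or_ne ((∑ i, (d n i : ℝ)) - 1) 0 with h | h
    · rw [h]; simp
    · rw [div_pow, div_pow, hsq]
      field_simp
  -- second error term
  have hF2 : Tendsto (fun n : ℕ => 2 * (∑ i, (d n i : ℝ)^2)^4
      / ((((∑ i, (d n i : ℝ)) - 1)^2 * ((∑ i, (d n i : ℝ)) - 3)) * (n:ℝ)^2))
      atTop (nhds 0) := by
    have hlim : Tendsto (fun n : ℕ =>
        2 * ((∑ i, (d n i : ℝ)^2) / n)^4 * ((n:ℝ)/((∑ i, (d n i : ℝ)) - 1))^2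
          * ((n:ℝ)/((∑ i, (d n i : ℝ)) - 3)) * ((1:ℝ)/n)) atTop
        (nhds (2 * μ₂^4 * (μ⁻¹)^2 * μ⁻¹ * 0)) :=
      ((((tendsto_const_nhds.mul (h2.pow 4)).mul (hL1.pow 2)).mul hL3).mul h0')
    rw [mul_zero] at hlim
    apply hlim.congr'
    filter_upwards [eventually_ge_atTop 1] with n hn1
    have hnpos : (0:ℝ) < n := by exact_mod_cast hn1
    rcases eq_or_ne ((∑ i, (d n i : ℝ)) - 1) 0 with ha | ha
    · rw [ha]; simp
    rcases eq_or_ne ((∑ i, (d n i : ℝ)) - 3) 0 with hb | hb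
    · rw [hb]; simp
    · field_simp
  -- squeeze
  have hsum : Tendsto (fun n : ℕ =>
      ((univ.sup (d n) : ℕ) : ℝ)^2 * (∑ i, (d n i : ℝ)^2)^2
        / (((∑ i, (d n i : ℝ)) - 1) * (n:ℝ)^2)
      + 2 * (∑ i, (d n i : ℝ)^2)^4
        / ((((∑ i, (d n i : ℝ)) - 1)^2 * ((∑ i, (d n i : ℝ)) - 3)) * (n:ℝ)^2))
      atTop (nhds 0) := by
    have := hF1.add hF2
    rwa [add_zero] at this
  apply tendsto_of_tendsto_of_tendsto_of_le_of_le' tendsto_const_nhds hsum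
  · exact Eventually.of_forall fun n =>
      div_nonneg (var_nonneg (hEvenCard n)) (by positivity)
  · filter_upwards [hN4, eventually_ge_atTop 1] with n h4 hn1
    have hb := var_bound (hEvenCard n) h4
    rw [hcard n] at hb
    calc varX3tilde n (d n) / (n:ℝ)^2
        ≤ (((univ.sup (d n) : ℕ) : ℝ)^2 * (∑ i, (d n i : ℝ)^2)^2 / ((∑ i, (d n i : ℝ)) - 1)
            + 2 * (∑ i, (d n i : ℝ)^2)^4
              / (((∑ i, (d n i : ℝ)) - 1)^2 * ((∑ i, (d n i : ℝ)) - 3))) / (n:ℝ)^2 := by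
          exact div_le_div_of_nonneg_right hb (by positivity)
      _ = _ := by rw [add_div, div_div, div_div]
end

section
/- Assume the degree sequences satisfy (1/n)Σ d_i → μ ∈ (0,∞) and (1/n)Σ d_i² → μ₂ < ∞ with ν := μ₂ - μ = 0. Then the probability that the configuration model multigraph is simple tends to 1, i.e., P(L = 0 and M = 0) → 1, where L is the number of loops and M the number of pairs of parallel edges. -/
open Finset Filter

/-- Probability, over a uniformly random configuration, of the event `P`. -/
noncomputable def probConf (n : ℕ) (d : Fin n → ℕ)
    (P : (HalfEdge n d → HalfEdge n d) → Prop) [DecidablePred P] : ℝ :=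
  (∑ f : HalfEdge n d → HalfEdge n d, if IsConfig f ∧ P f then (1 : ℝ) else 0) /
    (∑ f : HalfEdge n d → HalfEdge n d, if IsConfig f then (1 : ℝ) else 0)

/-- Number of loops of the configuration multigraph. -/
def numLoops {n : ℕ} {d : Fin n → ℕ} (f : HalfEdge n d → HalfEdge n d) : ℕ :=
  (Finset.univ.filter fun x : HalfEdge n d => (f x).1 = x.1).card / 2

/-- Number of unordered pairs of parallel edges of the configuration multigraph. -/
def numParallelPairs {n : ℕ} {d : Fin n → ℕ} (f : HalfEdge n d → HalfEdge n d) : ℕ :=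
  (Finset.univ.filter fun p : HalfEdge n d × HalfEdge n d =>
    p.1.1 = p.2.1 ∧ p.1 ≠ p.2 ∧ (f p.1).1 = (f p.2).1 ∧ p.1.1 < (f p.1).1).card / 2

theorem Nat.sub_sub_sub_aux (m : ℕ) : m - 1 - 1 - 1 = m - 3 := by omega

namespace CfgAux

variable {n : ℕ} {d : Fin n → ℕ}

local notation "H" => HalfEdge n d

/-- count of configurations satisfying P -/
noncomputable def cnt (n : ℕ) (d : Fin n → ℕ) (P : (HalfEdge n d → HalfEdge n d) → Prop) : ℕ :=
  Nat.card {f : HalfEdge n d → HalfEdge n d // IsConfig f ∧ P f}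

lemma cnt_eq (P : (H → H) → Prop) [DecidablePred P] :
    cnt n d P = (univ.filter fun f : H → H => IsConfig f ∧ P f).card := by
  rw [cnt, Nat.card_eq_fintype_card, Fintype.card_subtype]

lemma isConfig_conj (σ : Equiv.Perm H) (f : H → H) (hf : IsConfig f) :
    IsConfig (σ ∘ f ∘ σ.symm) := by
  constructor
  · intro x
    simp [Function.comp, hf.1]
  · intro x hx
    exact hf.2 (σ.symm x) (by simpa using congrArg σ.symm hx)

lemma cnt_conj (σ : Equiv.Perm H) (P Q : (H → H) → Prop)
    (h : ∀ f, IsConfig f → (P f ↔ Q (σ ∘ f ∘ σ.symm))) :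
    cnt n d P = cnt n d Q := by
  apply Nat.card_congr
  refine Equiv.subtypeEquiv (σ.arrowCongr σ) (fun f => ?_)
  have harr : (σ.arrowCongr σ) f = σ ∘ f ∘ σ.symm := rfl
  rw [harr]
  have hc : IsConfig (σ ∘ f ∘ σ.symm) ↔ IsConfig f := by
    constructor
    · intro hg
      have h2 := isConfig_conj σ.symm _ hg
      have : σ.symm ∘ (σ ∘ f ∘ σ.symm) ∘ σ.symm.symm = f := by
        funext x; simp
      rwa [this] at h2
    · exact isConfig_conj σ f
  constructor
  · rintro ⟨hf, hp⟩
    exact ⟨hc.2 hf, (h f hf).1 hp⟩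
  · rintro ⟨hg, hp⟩
    have hf := hc.1 hg
    exact ⟨hf, (h f hf).2 hp⟩

end CfgAux

namespace CfgAux

variable {n : ℕ} {d : Fin n → ℕ}

local notation "H" => HalfEdge n d
local notation "N" => Fintype.card (HalfEdge n d)

lemma sum_cnt_fiber (x : H) :
    ∑ y : H, cnt n d (fun f => f x = y) = cnt n d (fun _ => True) := by
  classical
  simp only [cnt_eq]
  rw [Finset.card_eq_sum_card_fiberwise (f := fun f : H → H => f x)
    (t := univ) (fun f _ => mem_univ _)]
  apply Finset.sum_congr rfl
  intro y _
  rw [Finset.filter_filter]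
  simp

lemma cnt_self (x : H) : cnt n d (fun f => f x = x) = 0 := by
  have : IsEmpty {f : H → H // IsConfig f ∧ f x = x} :=
    ⟨fun f => f.2.1.2 x f.2.2⟩
  exact Nat.card_of_isEmpty

lemma cnt_swap (x y y' : H) (hy : y ≠ x) (hy' : y' ≠ x) :
    cnt n d (fun f => f x = y) = cnt n d (fun f => f x = y') := by
  rcases eq_or_ne y y' with rfl | hne
  · rfl
  apply cnt_conj (Equiv.swap y y')
  intro f _
  have hx : Equiv.swap y y' x = x :=
    Equiv.swap_apply_of_ne_of_ne (Ne.symm hy) (Ne.symm hy')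
  have happ : (Equiv.swap y y' ∘ f ∘ (Equiv.swap y y').symm) x = Equiv.swap y y' (f x) := by
    simp [Function.comp, Equiv.symm_swap, hx]
  rw [happ]
  constructor
  · intro h; rw [h, Equiv.swap_apply_left]
  · intro h
    have := congrArg (Equiv.swap y y') h
    simpa [Equiv.swap_apply_self, Equiv.swap_apply_right] using this

lemma key1 (x y : H) (hxy : y ≠ x) :
    (N - 1) * cnt n d (fun f => f x = y) = cnt n d (fun _ => True) := by
  classical
  have h0 : ∑ z : H, cnt n d (fun f => f x = z) = cnt n d (fun _ => True) := sum_cnt_fiber x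
  rw [← Finset.sum_erase (f := fun z : H => cnt n d (fun f => f x = z)) univ (cnt_self x)] at h0
  have hconst : ∀ z ∈ univ.erase x, cnt n d (fun f => f x = z) = cnt n d (fun f => f x = y) := by
    intro z hz
    exact cnt_swap x z y (Finset.ne_of_mem_erase hz) hxy
  rw [Finset.sum_congr rfl hconst, Finset.sum_const, smul_eq_mul,
    Finset.card_erase_of_mem (mem_univ x), Finset.card_univ] at h0
  exact h0

end CfgAux

namespace CfgAux

variable {n : ℕ} {d : Fin n → ℕ}

local notation "H" => HalfEdge n d
local notation "N" => Fintype.card (HalfEdge n d)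

lemma sum_cnt_fiber2 (x1 x2 y : H) :
    ∑ z : H, cnt n d (fun f => f x1 = y ∧ f x2 = z)
      = cnt n d (fun f => f x1 = y) := by
  classical
  have e : {f : H → H // IsConfig f ∧ f x1 = y}
      ≃ Σ z : H, {f : H → H // IsConfig f ∧ f x1 = y ∧ f x2 = z} := by
    refine ⟨fun f => ⟨f.1 x2, f.1, f.2.1, f.2.2, rfl⟩,
      fun p => ⟨p.2.1, p.2.2.1, p.2.2.2.1⟩, fun f => rfl, ?_⟩
    rintro ⟨z, g, hg, h1, h2⟩
    dsimp only
    subst h2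
    rfl
  have := Nat.card_congr e
  rw [Nat.card_eq_fintype_card, Nat.card_eq_fintype_card, Fintype.card_sigma] at this
  unfold cnt
  rw [Nat.card_eq_fintype_card, this]
  apply Finset.sum_congr rfl
  intro z _
  rw [Nat.card_eq_fintype_card]

lemma cnt2_zero₂ (x1 x2 y : H) : cnt n d (fun f => f x1 = y ∧ f x2 = x2) = 0 := by
  have : IsEmpty {f : H → H // IsConfig f ∧ f x1 = y ∧ f x2 = x2} :=
    ⟨fun f => f.2.1.2 x2 f.2.2.2⟩
  exact Nat.card_of_isEmpty

lemma cnt2_zero₁ (x1 x2 y : H) (hy : y ≠ x2) :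
    cnt n d (fun f => f x1 = y ∧ f x2 = x1) = 0 := by
  have : IsEmpty {f : H → H // IsConfig f ∧ f x1 = y ∧ f x2 = x1} := by
    refine ⟨fun f => hy ?_⟩
    obtain ⟨g, ⟨hinv, _⟩, h1, h2⟩ := f
    rw [← h1, ← h2, hinv]
  exact Nat.card_of_isEmpty

lemma cnt2_zero₃ (x1 x2 y : H) (h12 : x1 ≠ x2) :
    cnt n d (fun f => f x1 = y ∧ f x2 = y) = 0 := by
  have : IsEmpty {f : H → H // IsConfig f ∧ f x1 = y ∧ f x2 = y} := by
    refine ⟨fun f => h12 ?_⟩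
    obtain ⟨g, ⟨hinv, _⟩, h1, h2⟩ := f
    rw [← hinv x1, h1, ← h2, hinv]
  exact Nat.card_of_isEmpty

lemma cnt2_swap (x1 x2 y z z' : H)
    (hz1 : z ≠ x1) (hz2 : z ≠ x2) (hzy : z ≠ y)
    (hz1' : z' ≠ x1) (hz2' : z' ≠ x2) (hzy' : z' ≠ y) :
    cnt n d (fun f => f x1 = y ∧ f x2 = z)
      = cnt n d (fun f => f x1 = y ∧ f x2 = z') := by
  rcases eq_or_ne z z' with rfl | hne
  · rfl
  apply cnt_conj (Equiv.swap z z')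
  intro f _
  have hx1 : Equiv.swap z z' x1 = x1 :=
    Equiv.swap_apply_of_ne_of_ne (Ne.symm hz1) (Ne.symm hz1')
  have hx2 : Equiv.swap z z' x2 = x2 :=
    Equiv.swap_apply_of_ne_of_ne (Ne.symm hz2) (Ne.symm hz2')
  have hy : Equiv.swap z z' y = y :=
    Equiv.swap_apply_of_ne_of_ne (Ne.symm hzy) (Ne.symm hzy')
  have happ1 : (Equiv.swap z z' ∘ f ∘ (Equiv.swap z z').symm) x1 = Equiv.swap z z' (f x1) := by
    simp [Function.comp, Equiv.symm_swap, hx1]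
  have happ2 : (Equiv.swap z z' ∘ f ∘ (Equiv.swap z z').symm) x2 = Equiv.swap z z' (f x2) := by
    simp [Function.comp, Equiv.symm_swap, hx2]
  rw [happ1, happ2]
  constructor
  · rintro ⟨h1, h2⟩
    refine ⟨by rw [h1, hy], by rw [h2, Equiv.swap_apply_left]⟩
  · rintro ⟨h1, h2⟩
    constructor
    · have := congrArg (Equiv.swap z z') h1
      simpa [Equiv.swap_apply_self, hy] using this
    · have := congrArg (Equiv.swap z z') h2
      simpa [Equiv.swap_apply_self, Equiv.swap_apply_left] using this

lemma key2 (x1 x2 y z : H) (h12 : x1 ≠ x2) (hy1 : y ≠ x1) (hy2 : y ≠ x2)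
    (hz1 : z ≠ x1) (hz2 : z ≠ x2) (hzy : z ≠ y) :
    (N - 3) * cnt n d (fun f => f x1 = y ∧ f x2 = z)
      = cnt n d (fun f => f x1 = y) := by
  classical
  have h0 := sum_cnt_fiber2 x1 x2 y
  rw [← Finset.sum_erase (f := fun w : H => cnt n d (fun f => f x1 = y ∧ f x2 = w)) univ
      (cnt2_zero₁ x1 x2 y hy2),
    ← Finset.sum_erase (f := fun w : H => cnt n d (fun f => f x1 = y ∧ f x2 = w)) _
      (cnt2_zero₂ x1 x2 y),
    ← Finset.sum_erase (f := fun w : H => cnt n d (fun f => f x1 = y ∧ f x2 = w)) _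
      (cnt2_zero₃ x1 x2 y h12)] at h0
  have hconst : ∀ w ∈ ((univ.erase x1).erase x2).erase y,
      cnt n d (fun f => f x1 = y ∧ f x2 = w) = cnt n d (fun f => f x1 = y ∧ f x2 = z) := by
    intro w hw
    simp only [Finset.mem_erase] at hw
    exact cnt2_swap x1 x2 y w z hw.2.2.1 hw.2.1 hw.1 hz1 hz2 hzy
  rw [Finset.sum_congr rfl hconst, Finset.sum_const, smul_eq_mul] at h0
  have hcard : (((univ.erase x1).erase x2).erase y).card = N - 3 := by
    rw [Finset.card_erase_of_mem (by simp [hy1, hy2]),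
      Finset.card_erase_of_mem (by simp [Ne.symm h12]),
      Finset.card_erase_of_mem (mem_univ x1), Finset.card_univ]
    exact Nat.sub_sub_sub_aux _
  rw [hcard] at h0
  exact h0

lemma keyD (x1 x2 y z : H) (h12 : x1 ≠ x2) (hy1 : y ≠ x1) (hy2 : y ≠ x2)
    (hz1 : z ≠ x1) (hz2 : z ≠ x2) (hzy : z ≠ y) :
    ((N - 1) * (N - 3)) * cnt n d (fun f => f x1 = y ∧ f x2 = z)
      = cnt n d (fun _ => True) := by
  rw [mul_assoc, key2 x1 x2 y z h12 hy1 hy2 hz1 hz2 hzy, key1 x1 y hy1]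

end CfgAux

lemma fin2_add_one_add_one : ∀ a : Fin 2, a + 1 + 1 = a := by decide
lemma fin2_add_one_ne : ∀ a : Fin 2, a + 1 ≠ a := by decide

namespace CfgAux

variable {n : ℕ} {d : Fin n → ℕ}

local notation "H" => HalfEdge n d

lemma exists_config (hEven : Even (∑ i, d i)) :
    ∃ f : H → H, IsConfig f := by
  have hN : Even (Fintype.card H) := by
    rw [Fintype.card_sigma]
    simpa using hEven
  obtain ⟨k, hk⟩ := hN
  have hk2 : Fintype.card H = 2 * k := by omega
  let E : H ≃ Fin 2 × Fin k :=
    ((Fintype.equivFin H).trans (finCongr hk2)).trans finProdFinEquiv.symm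
  refine ⟨fun x => E.symm ((E x).1 + 1, (E x).2), ?_, ?_⟩
  · intro x
    simp [fin2_add_one_add_one]
  · intro x hx
    have := congrArg (fun y => (E y).1) hx
    simp at this

lemma cnt_true_pos (hEven : Even (∑ i, d i)) :
    0 < cnt n d (fun _ => True) := by
  obtain ⟨f, hf⟩ := exists_config hEven
  have : Nonempty {f : H → H // IsConfig f ∧ True} := ⟨⟨f, hf, trivial⟩⟩
  exact Nat.card_pos

lemma cnt_le_sum {ι : Type*} (s : Finset ι) (A : (H → H) → Prop)
    (B : ι → (H → H) → Prop)
    (h : ∀ f, IsConfig f → A f → ∃ i ∈ s, B i f) :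
    cnt n d A ≤ ∑ i ∈ s, cnt n d (B i) := by
  classical
  simp only [cnt_eq]
  calc (univ.filter fun f : H → H => IsConfig f ∧ A f).card
      ≤ (s.biUnion fun i => univ.filter fun f : H → H => IsConfig f ∧ B i f).card := by
        apply Finset.card_le_card
        intro f hf
        simp only [Finset.mem_filter, Finset.mem_univ, true_and] at hf
        obtain ⟨i, hi, hb⟩ := h f hf.1 hf.2
        exact Finset.mem_biUnion.2 ⟨i, hi, by simp [hf.1, hb]⟩
    _ ≤ ∑ i ∈ s, (univ.filter fun f : H → H => IsConfig f ∧ B i f).card :=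
        Finset.card_biUnion_le

lemma cnt_mono (A B : (H → H) → Prop) (h : ∀ f, A f → B f) :
    cnt n d A ≤ cnt n d B := by
  classical
  simp only [cnt_eq]
  apply Finset.card_le_card
  intro f hf
  simp only [Finset.mem_filter, Finset.mem_univ, true_and] at hf ⊢
  exact ⟨hf.1, h f hf.2⟩

lemma cnt_le_true (A : (H → H) → Prop) : cnt n d A ≤ cnt n d (fun _ => True) :=
  cnt_mono A _ (fun _ _ => trivial)

lemma cnt_add_compl (A : (H → H) → Prop) :
    cnt n d A + cnt n d (fun f => ¬ A f) = cnt n d (fun _ => True) := by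
  classical
  simp only [cnt_eq]
  have h := Finset.card_filter_add_card_filter_not
    (s := univ.filter fun f : H → H => IsConfig f) (p := A)
  rw [Finset.filter_filter, Finset.filter_filter] at h
  rw [show (univ.filter fun f : H → H => IsConfig f ∧ True)
      = (univ.filter fun f : H → H => IsConfig f) by simp]
  convert h using 3

end CfgAux

def Pairs (n : ℕ) (d : Fin n → ℕ) : Finset (HalfEdge n d × HalfEdge n d) :=
  univ.filter fun p => p.1.1 = p.2.1 ∧ p.1 ≠ p.2

def Quad (n : ℕ) (d : Fin n → ℕ) :
    Finset ((HalfEdge n d × HalfEdge n d) × (HalfEdge n d × HalfEdge n d)) :=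
  univ.filter fun q => (q.1.1.1 = q.1.2.1 ∧ q.1.1 ≠ q.1.2) ∧
    (q.2.1.1 = q.2.2.1 ∧ q.2.1 ≠ q.2.2) ∧ q.1.1.1 ≠ q.2.1.1

namespace CfgAux

variable {n : ℕ} {d : Fin n → ℕ}

local notation "H" => HalfEdge n d

lemma card_filter_fst (j : Fin n) :
    (univ.filter fun y : H => y.1 = j).card = d j := by
  rw [Finset.card_filter, ← Finset.univ_sigma_univ, Finset.sum_sigma]
  simp [Finset.sum_ite_eq, apply_ite Finset.card]

lemma card_pairs : (Pairs n d).card = ∑ i, d i * (d i - 1) := by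
  rw [Pairs, Finset.card_filter, Fintype.sum_prod_type]
  have hx : ∀ x : H, (∑ y : H, if x.1 = y.1 ∧ x ≠ y then 1 else 0) = d x.1 - 1 := by
    intro x
    rw [← Finset.card_filter]
    have he : (univ.filter fun y : H => x.1 = y.1 ∧ x ≠ y)
        = (univ.filter fun y : H => y.1 = x.1).erase x := by
      ext y
      simp only [Finset.mem_filter, Finset.mem_erase, Finset.mem_univ, true_and]
      constructor
      · rintro ⟨h1, h2⟩; exact ⟨Ne.symm h2, h1.symm⟩
      · rintro ⟨h1, h2⟩; exact ⟨h2.symm, Ne.symm h1⟩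
    rw [he, Finset.card_erase_of_mem (by simp), card_filter_fst]
  rw [Finset.sum_congr rfl (fun x _ => hx x), ← Finset.univ_sigma_univ, Finset.sum_sigma]
  simp [Finset.sum_const, mul_comm]

lemma card_quad_le : (Quad n d).card ≤ (∑ i, d i * (d i - 1)) ^ 2 := by
  have hsub : Quad n d ⊆ Pairs n d ×ˢ Pairs n d := by
    intro q hq
    simp only [Quad, Pairs, Finset.mem_filter, Finset.mem_univ, true_and] at hq
    simp only [Finset.mem_product, Pairs, Finset.mem_filter, Finset.mem_univ, true_and]
    exact ⟨hq.1, hq.2.1⟩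
  calc (Quad n d).card ≤ (Pairs n d ×ˢ Pairs n d).card := Finset.card_le_card hsub
    _ = (∑ i, d i * (d i - 1)) ^ 2 := by rw [Finset.card_product, card_pairs]; ring

lemma cnt_or_le (A B : (H → H) → Prop) :
    cnt n d (fun f => A f ∨ B f) ≤ cnt n d A + cnt n d B := by
  classical
  simp only [cnt_eq]
  calc (univ.filter fun f : H → H => IsConfig f ∧ (A f ∨ B f)).card
      ≤ ((univ.filter fun f : H → H => IsConfig f ∧ A f)
          ∪ (univ.filter fun f : H → H => IsConfig f ∧ B f)).card := by
        apply Finset.card_le_card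
        intro f hf
        simp only [Finset.mem_filter, Finset.mem_union, Finset.mem_univ, true_and] at hf ⊢
        tauto
    _ ≤ _ := Finset.card_union_le _ _

lemma loops_bound :
    (Fintype.card H - 1) * cnt n d (fun f => numLoops f ≠ 0)
      ≤ (∑ i, d i * (d i - 1)) * cnt n d (fun _ => True) := by
  have h1 : cnt n d (fun f => numLoops f ≠ 0)
      ≤ ∑ p ∈ Pairs n d, cnt n d (fun f => f p.1 = p.2) := by
    apply cnt_le_sum
    intro f hf hL
    have hcard : (univ.filter fun x : H => (f x).1 = x.1).Nonempty := by
      rw [← Finset.card_pos]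
      by_contra h
      push_neg at h
      interval_cases h' : (univ.filter fun x : H => (f x).1 = x.1).card
      · exact hL (by simp [numLoops, h'])
    obtain ⟨x, hx⟩ := hcard
    simp only [Finset.mem_filter, Finset.mem_univ, true_and] at hx
    refine ⟨(x, f x), ?_, rfl⟩
    simp only [Pairs, Finset.mem_filter, Finset.mem_univ, true_and]
    exact ⟨hx.symm, fun h => hf.2 x h.symm⟩
  calc (Fintype.card H - 1) * cnt n d (fun f => numLoops f ≠ 0)
      ≤ (Fintype.card H - 1) * ∑ p ∈ Pairs n d, cnt n d (fun f => f p.1 = p.2) :=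
        Nat.mul_le_mul_left _ h1
    _ = ∑ p ∈ Pairs n d, (Fintype.card H - 1) * cnt n d (fun f => f p.1 = p.2) := by
        rw [Finset.mul_sum]
    _ = ∑ _p ∈ Pairs n d, cnt n d (fun _ => True) := by
        apply Finset.sum_congr rfl
        intro p hp
        simp only [Pairs, Finset.mem_filter, Finset.mem_univ, true_and] at hp
        exact key1 p.1 p.2 (Ne.symm hp.2)
    _ = (Pairs n d).card * cnt n d (fun _ => True) := by rw [Finset.sum_const, smul_eq_mul]
    _ = (∑ i, d i * (d i - 1)) * cnt n d (fun _ => True) := by rw [card_pairs]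

lemma par_bound :
    ((Fintype.card H - 1) * (Fintype.card H - 3)) * cnt n d (fun f => numParallelPairs f ≠ 0)
      ≤ (∑ i, d i * (d i - 1)) ^ 2 * cnt n d (fun _ => True) := by
  have h1 : cnt n d (fun f => numParallelPairs f ≠ 0)
      ≤ ∑ q ∈ Quad n d, cnt n d (fun f => f q.1.1 = q.2.1 ∧ f q.1.2 = q.2.2) := by
    apply cnt_le_sum
    intro f hf hM
    have hcard : (univ.filter fun p : H × H =>
        p.1.1 = p.2.1 ∧ p.1 ≠ p.2 ∧ (f p.1).1 = (f p.2).1 ∧ p.1.1 < (f p.1).1).Nonempty := by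
      rw [← Finset.card_pos]
      by_contra h
      push_neg at h
      interval_cases h' : (univ.filter fun p : H × H =>
          p.1.1 = p.2.1 ∧ p.1 ≠ p.2 ∧ (f p.1).1 = (f p.2).1 ∧ p.1.1 < (f p.1).1).card
      · exact hM (by simp [numParallelPairs, h'])
    obtain ⟨p, hp⟩ := hcard
    simp only [Finset.mem_filter, Finset.mem_univ, true_and] at hp
    obtain ⟨hv, hne, hfv, hlt⟩ := hp
    refine ⟨((p.1, p.2), (f p.1, f p.2)), ?_, rfl, rfl⟩
    simp only [Quad, Finset.mem_filter, Finset.mem_univ, true_and]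
    refine ⟨⟨hv, hne⟩, ⟨hfv, fun h => hne ?_⟩, ne_of_lt hlt⟩
    · rw [← hf.1 p.1, h, hf.1]
  calc ((Fintype.card H - 1) * (Fintype.card H - 3)) * cnt n d (fun f => numParallelPairs f ≠ 0)
      ≤ ((Fintype.card H - 1) * (Fintype.card H - 3)) *
          ∑ q ∈ Quad n d, cnt n d (fun f => f q.1.1 = q.2.1 ∧ f q.1.2 = q.2.2) :=
        Nat.mul_le_mul_left _ h1
    _ = ∑ q ∈ Quad n d, ((Fintype.card H - 1) * (Fintype.card H - 3)) *
          cnt n d (fun f => f q.1.1 = q.2.1 ∧ f q.1.2 = q.2.2) := by rw [Finset.mul_sum]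
    _ = ∑ _q ∈ Quad n d, cnt n d (fun _ => True) := by
        apply Finset.sum_congr rfl
        intro q hq
        simp only [Quad, Finset.mem_filter, Finset.mem_univ, true_and] at hq
        obtain ⟨⟨hv1, hne1⟩, ⟨hv2, hne2⟩, hvv⟩ := hq
        have hy1 : q.2.1 ≠ q.1.1 := fun h => hvv (by rw [h])
        have hy2 : q.2.1 ≠ q.1.2 := fun h => hvv (by rw [hv1, ← h])
        have hz1 : q.2.2 ≠ q.1.1 := fun h => hvv (by rw [hv2, h])
        have hz2 : q.2.2 ≠ q.1.2 := fun h => hvv (by rw [hv1, hv2, h])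
        exact keyD q.1.1 q.1.2 q.2.1 q.2.2 hne1 hy1 hy2 hz1 hz2 (Ne.symm hne2)
    _ = (Quad n d).card * cnt n d (fun _ => True) := by rw [Finset.sum_const, smul_eq_mul]
    _ ≤ (∑ i, d i * (d i - 1)) ^ 2 * cnt n d (fun _ => True) :=
        Nat.mul_le_mul_right _ card_quad_le

lemma probConf_eq (P : (H → H) → Prop) [DecidablePred P] :
    probConf n d P = (cnt n d P : ℝ) / (cnt n d (fun _ => True) : ℝ) := by
  rw [probConf, Finset.sum_boole, Finset.sum_boole, cnt_eq, cnt_eq]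
  have : (univ.filter fun f : H → H => IsConfig f ∧ True)
      = univ.filter fun f : H → H => IsConfig f := by simp
  rw [this]

lemma card_H : Fintype.card H = ∑ i, d i := by
  rw [Fintype.card_sigma]
  simp

end CfgAux

lemma cast_dd (m : ℕ) : ((m * (m - 1) : ℕ) : ℝ) = (m : ℝ) ^ 2 - m := by
  cases m with
  | zero => simp
  | succ k => push_cast [Nat.succ_sub_one]; ring

lemma div_div_same_cancel (a b c : ℝ) (hc : c ≠ 0) : (a / c) / (b / c) = a / b := by
  rw [div_div_div_comm, div_self hc, div_one]

lemma real_bound (S Nc T g b l m : ℝ) (hT : 0 < T) (hN4 : 4 ≤ Nc)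
    (hg : g = T - b) (hb : b ≤ l + m) (hl : (Nc - 1) * l ≤ S * T)
    (hm : ((Nc - 1) * (Nc - 3)) * m ≤ S ^ 2 * T) :
    1 - S / (Nc - 1) - S ^ 2 / ((Nc - 1) * (Nc - 3)) ≤ g / T := by
  have hN1 : 0 < Nc - 1 := by linarith
  have hN3 : 0 < Nc - 3 := by linarith
  have e1 : l / T ≤ S / (Nc - 1) := by
    rw [div_le_div_iff₀ hT hN1]
    nlinarith
  have e2 : m / T ≤ S ^ 2 / ((Nc - 1) * (Nc - 3)) := by
    rw [div_le_div_iff₀ hT (by positivity)]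
    nlinarith
  have hgT : g / T = 1 - b / T := by rw [hg, sub_div, div_self hT.ne']
  rw [hgT]
  have hbT : b / T ≤ l / T + m / T := by
    rw [← add_div]
    exact (div_le_div_iff_of_pos_right hT).2 hb
  linarith

/-- If `(1/n) ∑ d i → μ > 0` and `(1/n) ∑ d i² → μ₂` with `ν = μ₂ - μ = 0`, then the
configuration model multigraph is whp simple: `P(L = 0 ∧ M = 0) → 1`. -/
theorem whp_simple_when_nu_zero
    (d : (n : ℕ) → Fin n → ℕ) (hEven : ∀ n, Even (∑ i, d n i))
    (μ μ₂ : ℝ) (hμ : 0 < μ)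
    (h1 : Tendsto (fun n : ℕ => (∑ i, (d n i : ℝ)) / n) atTop (nhds μ))
    (h2 : Tendsto (fun n : ℕ => (∑ i, (d n i : ℝ) ^ 2) / n) atTop (nhds μ₂))
    (hν : μ₂ - μ = 0) :
    Tendsto (fun n => probConf n (d n) (fun f => numLoops f = 0 ∧ numParallelPairs f = 0))
      atTop (nhds 1) := by
  have hS_cast : ∀ n, ((∑ i, d n i * (d n i - 1) : ℕ) : ℝ)
      = (∑ i, (d n i : ℝ) ^ 2) - (∑ i, (d n i : ℝ)) := by
    intro n
    rw [Nat.cast_sum, ← Finset.sum_sub_distrib]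
    exact Finset.sum_congr rfl fun i _ => cast_dd (d n i)
  have hNc_cast : ∀ n, ((Fintype.card (HalfEdge n (d n)) : ℕ) : ℝ) = ∑ i, (d n i : ℝ) := by
    intro n
    rw [CfgAux.card_H, Nat.cast_sum]
  have hSlim : Tendsto (fun n => ((∑ i, d n i * (d n i - 1) : ℕ) : ℝ) / n) atTop (nhds 0) := by
    have heq : (fun n => ((∑ i, d n i * (d n i - 1) : ℕ) : ℝ) / n)
        = fun n => (∑ i, (d n i : ℝ) ^ 2) / n - (∑ i, (d n i : ℝ)) / n := by
      funext n; rw [hS_cast, sub_div]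
    rw [heq]
    have := h2.sub h1
    rwa [hν] at this
  have hNlim : Tendsto (fun n => ((Fintype.card (HalfEdge n (d n)) : ℕ) : ℝ) / n)
      atTop (nhds μ) := by
    have heq : (fun n => ((Fintype.card (HalfEdge n (d n)) : ℕ) : ℝ) / n)
        = fun n => (∑ i, (d n i : ℝ)) / n := by
      funext n; rw [hNc_cast]
    rw [heq]; exact h1
  have hNtop : Tendsto (fun n => ((Fintype.card (HalfEdge n (d n)) : ℕ) : ℝ)) atTop atTop := by
    have h' := Tendsto.pos_mul_atTop hμ hNlim tendsto_natCast_atTop_atTop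
    apply h'.congr'
    filter_upwards [eventually_ge_atTop 1] with n hn
    have : (n : ℝ) ≠ 0 := by positivity
    field_simp
  have hNge : ∀ᶠ n in atTop, 4 ≤ Fintype.card (HalfEdge n (d n)) := by
    filter_upwards [hNtop.eventually_ge_atTop 4] with n h
    exact_mod_cast h
  -- limit of lower bound function
  have hμne : μ ≠ 0 := ne_of_gt hμ
  have hinv : Tendsto (fun n : ℕ => 1 / (n : ℝ)) atTop (nhds 0) :=
    tendsto_one_div_atTop_nhds_zero_nat
  have h3inv : Tendsto (fun n : ℕ => 3 / (n : ℝ)) atTop (nhds 0) := by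
    have := hinv.const_mul (3 : ℝ)
    simpa [mul_one_div, div_eq_mul_inv] using this
  have hden1 : Tendsto (fun n : ℕ => ((Fintype.card (HalfEdge n (d n)) : ℕ) : ℝ) / n - 1 / n)
      atTop (nhds μ) := by simpa using hNlim.sub hinv
  have hden3 : Tendsto (fun n : ℕ => ((Fintype.card (HalfEdge n (d n)) : ℕ) : ℝ) / n - 3 / n)
      atTop (nhds μ) := by simpa using hNlim.sub h3inv
  have t1 : Tendsto (fun n : ℕ => ((∑ i, d n i * (d n i - 1) : ℕ) : ℝ)
      / (((Fintype.card (HalfEdge n (d n)) : ℕ) : ℝ) - 1)) atTop (nhds 0) := by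
    have := hSlim.div hden1 hμne
    rw [zero_div] at this
    apply this.congr'
    filter_upwards [eventually_ge_atTop 1] with n hn
    have hn0 : (n : ℝ) ≠ 0 := Nat.cast_ne_zero.2 (by omega)
    simp only [Pi.div_apply]
    rw [show ((Fintype.card (HalfEdge n (d n)) : ℕ) : ℝ) / n - 1 / n
        = (((Fintype.card (HalfEdge n (d n)) : ℕ) : ℝ) - 1) / n by rw [sub_div],
      div_div_same_cancel _ _ _ hn0]
  have t2 : Tendsto (fun n : ℕ => ((∑ i, d n i * (d n i - 1) : ℕ) : ℝ) ^ 2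
      / ((((Fintype.card (HalfEdge n (d n)) : ℕ) : ℝ) - 1)
        * (((Fintype.card (HalfEdge n (d n)) : ℕ) : ℝ) - 3))) atTop (nhds 0) := by
    have hnum : Tendsto (fun n : ℕ => (((∑ i, d n i * (d n i - 1) : ℕ) : ℝ) / n) ^ 2)
        atTop (nhds 0) := by simpa using hSlim.pow 2
    have hden : Tendsto (fun n : ℕ =>
        (((Fintype.card (HalfEdge n (d n)) : ℕ) : ℝ) / n - 1 / n)
          * (((Fintype.card (HalfEdge n (d n)) : ℕ) : ℝ) / n - 3 / n))
        atTop (nhds (μ * μ)) := hden1.mul hden3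
    have := hnum.div hden (by positivity)
    rw [zero_div] at this
    apply this.congr'
    filter_upwards [eventually_ge_atTop 1] with n hn
    have hn0 : (n : ℝ) ≠ 0 := Nat.cast_ne_zero.2 (by omega)
    simp only [Pi.div_apply]
    rw [div_pow]
    rw [show (((Fintype.card (HalfEdge n (d n)) : ℕ) : ℝ) / n - 1 / n)
        * (((Fintype.card (HalfEdge n (d n)) : ℕ) : ℝ) / n - 3 / n)
        = ((((Fintype.card (HalfEdge n (d n)) : ℕ) : ℝ) - 1)
          * (((Fintype.card (HalfEdge n (d n)) : ℕ) : ℝ) - 3)) / (n:ℝ)^2 by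
        rw [← sub_div, ← sub_div, div_mul_div_comm]; ring_nf]
    rw [div_div_same_cancel _ _ _ (by positivity : ((n:ℝ)^2) ≠ 0)]
  have hglim : Tendsto (fun n : ℕ => 1 - ((∑ i, d n i * (d n i - 1) : ℕ) : ℝ)
      / (((Fintype.card (HalfEdge n (d n)) : ℕ) : ℝ) - 1)
      - ((∑ i, d n i * (d n i - 1) : ℕ) : ℝ) ^ 2
      / ((((Fintype.card (HalfEdge n (d n)) : ℕ) : ℝ) - 1)
        * (((Fintype.card (HalfEdge n (d n)) : ℕ) : ℝ) - 3))) atTop (nhds 1) := by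
    have := (tendsto_const_nhds (x := (1:ℝ)) (f := atTop)).sub t1 |>.sub t2
    simpa using this
  refine tendsto_of_tendsto_of_tendsto_of_le_of_le' hglim tendsto_const_nhds ?_ ?_
  · -- lower bound
    filter_upwards [hNge] with n h4
    have hTpos : (0:ℝ) < ((CfgAux.cnt n (d n) fun _ => True : ℕ) : ℝ) := by
      exact_mod_cast CfgAux.cnt_true_pos (hEven n)
    rw [CfgAux.probConf_eq]
    have hN4 : (4:ℝ) ≤ ((Fintype.card (HalfEdge n (d n)) : ℕ) : ℝ) := by exact_mod_cast h4
    have hN1 : (0:ℝ) < ((Fintype.card (HalfEdge n (d n)) : ℕ) : ℝ) - 1 := by linarith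
    have hN3 : (0:ℝ) < ((Fintype.card (HalfEdge n (d n)) : ℕ) : ℝ) - 3 := by linarith
    have hc1 : ((Fintype.card (HalfEdge n (d n)) - 1 : ℕ) : ℝ)
        = ((Fintype.card (HalfEdge n (d n)) : ℕ) : ℝ) - 1 := by
      rw [Nat.cast_sub (by omega)]; norm_num
    have hc3 : ((Fintype.card (HalfEdge n (d n)) - 3 : ℕ) : ℝ)
        = ((Fintype.card (HalfEdge n (d n)) : ℕ) : ℝ) - 3 := by
      rw [Nat.cast_sub (by omega)]; norm_num
    have hL := CfgAux.loops_bound (n := n) (d := d n)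
    have hM := CfgAux.par_bound (n := n) (d := d n)
    have hL' : (((Fintype.card (HalfEdge n (d n)) : ℕ) : ℝ) - 1)
        * ((CfgAux.cnt n (d n) fun f => numLoops f ≠ 0 : ℕ) : ℝ)
        ≤ ((∑ i, d n i * (d n i - 1) : ℕ) : ℝ) * ((CfgAux.cnt n (d n) fun _ => True : ℕ) : ℝ) := by
      have := (Nat.cast_le (α := ℝ)).2 hL
      rw [Nat.cast_mul, Nat.cast_mul, hc1] at this
      exact this
    have hM' : ((((Fintype.card (HalfEdge n (d n)) : ℕ) : ℝ) - 1)
          * (((Fintype.card (HalfEdge n (d n)) : ℕ) : ℝ) - 3))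
        * ((CfgAux.cnt n (d n) fun f => numParallelPairs f ≠ 0 : ℕ) : ℝ)
        ≤ ((∑ i, d n i * (d n i - 1) : ℕ) : ℝ) ^ 2
          * ((CfgAux.cnt n (d n) fun _ => True : ℕ) : ℝ) := by
      have := (Nat.cast_le (α := ℝ)).2 hM
      rw [Nat.cast_mul, Nat.cast_mul, Nat.cast_mul, Nat.cast_pow, hc1, hc3] at this
      exact this
    have hsplit := CfgAux.cnt_add_compl (n := n) (d := d n)
      (fun f => numLoops f = 0 ∧ numParallelPairs f = 0)
    have hbadle : CfgAux.cnt n (d n) (fun f => ¬(numLoops f = 0 ∧ numParallelPairs f = 0))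
        ≤ CfgAux.cnt n (d n) (fun f => numLoops f ≠ 0)
          + CfgAux.cnt n (d n) (fun f => numParallelPairs f ≠ 0) := by
      refine le_trans (CfgAux.cnt_mono _ (fun f => numLoops f ≠ 0 ∨ numParallelPairs f ≠ 0) ?_)
        (CfgAux.cnt_or_le _ _)
      intro f hf
      tauto
    have hgood : ((CfgAux.cnt n (d n) fun f => numLoops f = 0 ∧ numParallelPairs f = 0 : ℕ) : ℝ)
        = ((CfgAux.cnt n (d n) fun _ => True : ℕ) : ℝ)
          - ((CfgAux.cnt n (d n) fun f => ¬(numLoops f = 0 ∧ numParallelPairs f = 0) : ℕ) : ℝ) := by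
      have h' := congrArg (fun k : ℕ => (k : ℝ)) hsplit
      push_cast at h'
      linarith
    have hbadle' : ((CfgAux.cnt n (d n) fun f => ¬(numLoops f = 0 ∧ numParallelPairs f = 0) : ℕ) : ℝ)
        ≤ ((CfgAux.cnt n (d n) fun f => numLoops f ≠ 0 : ℕ) : ℝ)
          + ((CfgAux.cnt n (d n) fun f => numParallelPairs f ≠ 0 : ℕ) : ℝ) := by
      exact_mod_cast hbadle
    exact real_bound _ _ _ _ _ _ _ hTpos hN4 hgood hbadle' hL' hM'
  · -- upper bound
    refine Eventually.of_forall (fun n => ?_)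
    rw [CfgAux.probConf_eq]
    have hTpos : (0:ℝ) < ((CfgAux.cnt n (d n) fun _ => True : ℕ) : ℝ) := by
      exact_mod_cast CfgAux.cnt_true_pos (hEven n)
    rw [div_le_one hTpos]
    exact_mod_cast CfgAux.cnt_le_true _
end
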